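/- arXiv:1805.02426 — 5 statements merged into one kernel-verified Lean document; each statement's English description precedes it below -/
import Mathlib

section
/- If 0 < q ≤ p < 1/2 and ε_d ∈ (0,1), then for every sequence of key sizes Δ(n) no positive relative throughput is achievable: for every r > 0 there is no (1 − ε_d)-covert sequence of codes with Δ(n) key bits, (log₂ N_n)/√n ≥ r for all n, and P_err → 0. Equivalently, the covert capacity r*_{Δ(n),ε_d}(p,q) = 0. -/
/-!
Covert communication over an adversarially jammed binary channel.

A code with blocklength `n`, `N` messages and `Δ` key bits consists of an
encoder `Fin N → key → {0,1}^n` and a decoder `{0,1}^n → key → {0,…,N}`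
(we model the output `0` ("declare silence") as `Option.none`).
When Alice is silent she transmits the all-zeros vector.
James observes `Z = X ⊕ S̄` with `S̄` i.i.d. Bernoulli(q); a jamming strategy is a
stochastic kernel from observations `z` to jamming vectors `s` of Hamming
weight at most `p·n`.  Bob receives `Y = X ⊕ S`.
-/

namespace CovertComm

open Finset Filter

/-- Binary vectors of length `n`. -/
abbrev BV (n : ℕ) := Fin n → Bool

/-- Coordinatewise XOR of binary vectors. -/
def vxor {n : ℕ} (x y : BV n) : BV n := fun i => Bool.xor (x i) (y i)

/-- Hamming weight. -/
def wt {n : ℕ} (x : BV n) : ℕ := (Finset.univ.filter fun i => x i = true).card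

/-- Probability that an i.i.d. Bernoulli(q) noise vector equals `z`. -/
noncomputable def noiseP {n : ℕ} (q : ℝ) (z : BV n) : ℝ :=
  ∏ i, if z i then q else 1 - q

/-- A code: encoder and decoder.  Decoder output `none` means "declare 0 (silence)". -/
structure Code (n N Δ : ℕ) where
  enc : Fin N → BV Δ → BV n
  dec : BV n → BV Δ → Option (Fin N)

/-- A jamming strategy: a stochastic kernel `W z s`, supported on jamming
vectors of Hamming weight at most `p·n`. -/
structure Jammer (n : ℕ) (p : ℝ) where
  W : BV n → BV n → ℝ
  nonneg : ∀ z s, 0 ≤ W z s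
  sum_one : ∀ z, ∑ s : BV n, W z s = 1
  wt_le : ∀ z s, W z s ≠ 0 → (wt s : ℝ) ≤ p * n

/-- False-alarm probability of detector `Φ`: when `T = 0`, `Z` is pure
Bernoulli(q) noise. -/
noncomputable def PFA {n : ℕ} (q : ℝ) (Φ : BV n → Bool) : ℝ :=
  ∑ z : BV n, noiseP q z * (if Φ z then (1 : ℝ) else 0)

/-- Missed-detection probability of detector `Φ`: when `T = 1`, the message and
key are uniform and `Z = Enc(M,K) ⊕ S̄`. -/
noncomputable def PMD {n N Δ : ℕ} (q : ℝ) (C : Code n N Δ) (Φ : BV n → Bool) : ℝ :=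
  (1 / ((N : ℝ) * 2 ^ Δ)) * ∑ m : Fin N, ∑ k : BV Δ, ∑ z : BV n,
    noiseP q (vxor z (C.enc m k)) * (if Φ z then (0 : ℝ) else 1)

/-- Probability of decoding error when Alice is active:
`P(Dec(Enc(M,K) ⊕ S, K) ≠ M | T = 1)` with uniform `M, K`, where
`S` is drawn from `J.W` applied to James' observation `Enc(M,K) ⊕ S̄`. -/
noncomputable def errActive {n N Δ : ℕ} {p : ℝ} (q : ℝ) (C : Code n N Δ)
    (J : Jammer n p) : ℝ :=
  (1 / ((N : ℝ) * 2 ^ Δ)) * ∑ m : Fin N, ∑ k : BV Δ, ∑ zb : BV n,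
    noiseP q zb * ∑ s : BV n, J.W (vxor (C.enc m k) zb) s *
      (if C.dec (vxor (C.enc m k) s) k = some m then (0 : ℝ) else 1)

/-- Probability of decoding error when Alice is silent:
`P(Dec(S, K) ≠ 0 | T = 0)`, where `S` is drawn from `J.W` applied to the pure
noise observation. -/
noncomputable def errSilent {n N Δ : ℕ} {p : ℝ} (q : ℝ) (C : Code n N Δ)
    (J : Jammer n p) : ℝ :=
  (1 / (2 ^ Δ : ℝ)) * ∑ k : BV Δ, ∑ zb : BV n,
    noiseP q zb * ∑ s : BV n, J.W zb s *
      (if C.dec s k = Option.none then (0 : ℝ) else 1)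

/-- `P_err`: worst case over jamming strategies of the sum of the two error
probabilities. -/
noncomputable def Perr {n N Δ : ℕ} (p q : ℝ) (C : Code n N Δ) : ℝ :=
  ⨆ J : Jammer n p, (errSilent q C J + errActive q C J)

/-- `min_Φ (P_FA(Φ) + P_MD(Φ))` for a given code. -/
noncomputable def covertGap {n N Δ : ℕ} (q : ℝ) (C : Code n N Δ) : ℝ :=
  ⨅ Φ : BV n → Bool, (PFA q Φ + PMD q C Φ)

/-- A sequence of codes is `(1 − εd)`-covert if
`liminf_n min_Φ (P_FA + P_MD) ≥ 1 − εd`. -/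
def IsCovertSeq (q εd : ℝ) (N Δ : ℕ → ℕ) (C : ∀ n, Code n (N n) (Δ n)) : Prop :=
  1 - εd ≤ Filter.liminf (fun n => covertGap q (C n)) Filter.atTop

/-- Relative throughput `r` is achievable with key sizes `Δ(n)`: there is a
`(1 − εd)`-covert sequence of codes with `Δ(n)` key bits, relative throughput
at least `r` at every (positive) blocklength, and `P_err → 0`. -/
def Achievable (p q εd : ℝ) (Δ : ℕ → ℕ) (r : ℝ) : Prop :=
  ∃ (N : ℕ → ℕ) (C : ∀ n, Code n (N n) (Δ n)),
    IsCovertSeq q εd N Δ C ∧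
    (∀ n : ℕ, 1 ≤ n → r ≤ Real.logb 2 (N n) / Real.sqrt n) ∧
    Filter.Tendsto (fun n => Perr p q (C n)) Filter.atTop (nhds 0)

/-- The Gaussian `Q`-function. -/
noncomputable def Qfun (x : ℝ) : ℝ :=
  ∫ u in Set.Ioi x, Real.exp (-u ^ 2 / 2) / Real.sqrt (2 * Real.pi)

/-- Inverse of the `Q`-function. -/
noncomputable def Qinv : ℝ → ℝ := Function.invFun Qfun

/-- The code-weight parameter `t(q, εd)`. -/
noncomputable def tpar (q εd : ℝ) : ℝ :=
  2 * Real.sqrt (q * (1 - q)) / (1 - 2 * q) * Qinv ((1 - εd) / 2)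

/-- Weight-normalized mutual information for Bob, `I_B(p,q)`. -/
noncomputable def IB (p q : ℝ) : ℝ :=
  p * (q - 1) / q *
      Real.logb 2 ((q - p + p * q) * (1 - p) / (p ^ 2 * (1 - q)))
    + Real.logb 2 ((q - p + p * q) / (p * q))

/-- Weight-normalized mutual information for James, `I_J(q)`. -/
noncomputable def IJ (q : ℝ) : ℝ := (1 - 2 * q) * Real.logb 2 ((1 - q) / q)

end CovertComm

namespace CovertComm

open Finset

/-! ### Auxiliary lemmas: basic vector facts -/

lemma vxor_vxor {n : ℕ} (x y : BV n) : vxor x (vxor x y) = y := by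
  funext i
  simp [vxor, ← Bool.xor_assoc]

lemma wt_le {n : ℕ} (z : BV n) : wt z ≤ n := by
  classical
  simpa [wt] using (Finset.card_filter_le Finset.univ (fun i => z i = true))

lemma wt_false {n : ℕ} : wt (fun _ => false : BV n) = 0 := by
  simp [wt]

lemma wt_vxor_le {n : ℕ} (x y : BV n) : wt (vxor x y) ≤ wt x + wt y := by
  classical
  refine le_trans (Finset.card_le_card ?_) (Finset.card_union_le _ _)
  intro i hi
  simp only [wt, vxor, Finset.mem_filter, Finset.mem_union, Finset.mem_univ, true_and] at *
  cases hx : x i <;> cases hy : y i <;> simp_all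

lemma wt_eq_sum {n : ℕ} (z : BV n) :
    (wt z : ℝ) = ∑ i, (if z i then (1 : ℝ) else 0) := by
  classical
  rw [wt, Finset.card_filter]
  push_cast
  exact Finset.sum_congr rfl (fun i _ => by by_cases h : z i <;> simp [h])

/-! ### Product (independent Bernoulli) measures on `BV n` -/

/-- Product Bernoulli measure with coordinate probabilities `r i`. -/
noncomputable def pmeas {n : ℕ} (r : Fin n → ℝ) (z : BV n) : ℝ :=
  ∏ i, if z i then r i else 1 - r i

lemma noiseP_eq_pmeas {n : ℕ} (q : ℝ) (z : BV n) :
    noiseP q z = pmeas (fun _ => q) z := rfl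

lemma pmeas_nonneg {n : ℕ} {r : Fin n → ℝ} (hr : ∀ i, 0 ≤ r i ∧ r i ≤ 1)
    (z : BV n) : 0 ≤ pmeas r z := by
  refine Finset.prod_nonneg fun i _ => ?_
  by_cases h : z i <;> simp [h, (hr i).1, sub_nonneg.2 (hr i).2]

lemma sum_prod_bool {n : ℕ} (f : Fin n → Bool → ℝ) :
    ∑ z : BV n, ∏ i, f i (z i) = ∏ i, (f i false + f i true) := by
  induction n with
  | zero => simp
  | succ n ih =>
    rw [Fin.prod_univ_succ, ← (Fin.consEquiv (fun _ => Bool)).sum_comp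
      (fun z => ∏ i, f i (z i)), Fintype.sum_prod_type]
    simp only [Fin.consEquiv_apply]
    have h : ∀ (b : Bool) (z : Fin n → Bool),
        ∏ i, f i ((Fin.cons b z : Fin (n+1) → Bool) i)
          = f 0 b * ∏ i, f i.succ (z i) := by
      intro b z; rw [Fin.prod_univ_succ]; simp
    simp only [h, ← Finset.mul_sum, ← Finset.sum_mul, ih (fun i => f i.succ)]
    rw [Fintype.sum_bool]; ring

lemma sum_pmeas {n : ℕ} (r : Fin n → ℝ) : ∑ z : BV n, pmeas r z = 1 := by
  rw [show (fun z : BV n => pmeas r z) = fun z => ∏ i, (fun i b =>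
    if b then r i else 1 - r i) i (z i) from rfl]
  refine Eq.trans (sum_prod_bool (fun i b => if b then r i else 1 - r i)) ?_
  simp

/-- One marked coordinate: `∑_z P_r(z) g(z i₀) = (1-r i₀) g(false) + r i₀ g(true)`. -/
lemma sum_pmeas_single {n : ℕ} (r : Fin n → ℝ) (i0 : Fin n) (g : Bool → ℝ) :
    ∑ z : BV n, pmeas r z * g (z i0)
      = (1 - r i0) * g false + r i0 * g true := by
  classical
  have key : ∀ z : BV n, pmeas r z * g (z i0)
      = ∏ i, (fun i b => (if b then r i else 1 - r i) *
          (if i = i0 then g b else 1)) i (z i) := by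
    intro z
    rw [Finset.prod_mul_distrib]
    congr 1
    rw [Finset.prod_ite_eq' Finset.univ i0 (fun i => g (z i))]
    simp
  simp only [key]
  refine Eq.trans (sum_prod_bool (fun i b => (if b then r i else 1 - r i) *
      (if i = i0 then g b else 1))) ?_
  rw [← Finset.mul_prod_erase Finset.univ _ (Finset.mem_univ i0)]
  have h1 : ∀ i ∈ Finset.univ.erase i0,
      ((if (false : Bool) then r i else 1 - r i) * (if i = i0 then g false else 1)
        + (if (true : Bool) then r i else 1 - r i) * (if i = i0 then g true else 1)) = 1 := by
    intro i hi
    have : i ≠ i0 := (Finset.mem_erase.1 hi).1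
    simp [this]
  rw [Finset.prod_eq_one h1]
  simp [mul_comm]

/-- Two marked coordinates (independence). -/
lemma sum_pmeas_pair {n : ℕ} (r : Fin n → ℝ) {i0 i1 : Fin n} (hne : i0 ≠ i1)
    (g h : Bool → ℝ) :
    ∑ z : BV n, pmeas r z * (g (z i0) * h (z i1))
      = ((1 - r i0) * g false + r i0 * g true)
        * ((1 - r i1) * h false + r i1 * h true) := by
  classical
  have key : ∀ z : BV n, pmeas r z * (g (z i0) * h (z i1))
      = ∏ i, (fun i b => (if b then r i else 1 - r i) *
          ((if i = i0 then g b else 1) * (if i = i1 then h b else 1))) i (z i) := by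
    intro z
    simp only [Finset.prod_mul_distrib]
    congr 1
    rw [Finset.prod_ite_eq' Finset.univ i0 (fun i => g (z i)),
        Finset.prod_ite_eq' Finset.univ i1 (fun i => h (z i))]
    simp
  simp only [key]
  refine Eq.trans (sum_prod_bool (fun i b => (if b then r i else 1 - r i) *
      ((if i = i0 then g b else 1) * (if i = i1 then h b else 1)))) ?_
  have h01 : i1 ∈ Finset.univ.erase i0 := Finset.mem_erase.2 ⟨hne.symm, Finset.mem_univ _⟩
  rw [← Finset.mul_prod_erase Finset.univ _ (Finset.mem_univ i0),
      ← Finset.mul_prod_erase _ _ h01]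
  have h1 : ∀ i ∈ (Finset.univ.erase i0).erase i1,
      ((if (false : Bool) then r i else 1 - r i) *
          ((if i = i0 then g false else 1) * (if i = i1 then h false else 1))
        + (if (true : Bool) then r i else 1 - r i) *
          ((if i = i0 then g true else 1) * (if i = i1 then h true else 1))) = 1 := by
    intro i hi
    have hi1 : i ≠ i1 := (Finset.mem_erase.1 hi).1
    have hi0 : i ≠ i0 := (Finset.mem_erase.1 (Finset.mem_erase.1 hi).2).1
    simp [hi0, hi1]
  rw [Finset.prod_eq_one h1]
  simp [hne, hne.symm]
  try ring

/-- Mean of the Hamming weight under `pmeas r`. -/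
lemma sum_pmeas_wt {n : ℕ} (r : Fin n → ℝ) :
    ∑ z : BV n, pmeas r z * (wt z : ℝ) = ∑ i, r i := by
  classical
  have : ∀ z : BV n, pmeas r z * (wt z : ℝ)
      = ∑ i, pmeas r z * (if z i then (1:ℝ) else 0) := by
    intro z; rw [wt_eq_sum, Finset.mul_sum]
  simp only [this]
  rw [Finset.sum_comm]
  refine Finset.sum_congr rfl fun i _ => ?_
  rw [sum_pmeas_single r i (fun b => if b then (1:ℝ) else 0)]
  simp

/-- Second central moment (variance) of the Hamming weight under `pmeas r`. -/
lemma sum_pmeas_var {n : ℕ} (r : Fin n → ℝ) :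
    ∑ z : BV n, pmeas r z * ((wt z : ℝ) - ∑ i, r i) ^ 2
      = ∑ i, r i * (1 - r i) := by
  classical
  have expand : ∀ z : BV n, ((wt z : ℝ) - ∑ i, r i) ^ 2
      = ∑ i, ∑ j, ((if z i then (1:ℝ) else 0) - r i) * ((if z j then (1:ℝ) else 0) - r j) := by
    intro z
    rw [wt_eq_sum, ← Finset.sum_sub_distrib, sq, Finset.sum_mul_sum]
  have swap : ∑ z : BV n, pmeas r z * ((wt z : ℝ) - ∑ i, r i) ^ 2
      = ∑ i, ∑ j, ∑ z : BV n, pmeas r z *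
          (((if z i then (1:ℝ) else 0) - r i) * ((if z j then (1:ℝ) else 0) - r j)) := by
    simp only [expand, Finset.mul_sum]
    rw [Finset.sum_comm]
    refine Finset.sum_congr rfl fun i _ => ?_
    rw [Finset.sum_comm]
  rw [swap]
  have inner : ∀ i j : Fin n, (∑ z : BV n, pmeas r z *
        (((if z i then (1:ℝ) else 0) - r i) * ((if z j then (1:ℝ) else 0) - r j)))
      = if j = i then r i * (1 - r i) else 0 := by
    intro i j
    by_cases hij : j = i
    · subst hij
      have : ∀ z : BV n, pmeas r z *
          (((if z j then (1:ℝ) else 0) - r j) * ((if z j then (1:ℝ) else 0) - r j))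
          = pmeas r z * (fun b => ((if b then (1:ℝ) else 0) - r j) ^ 2) (z j) := by
        intro z; simp [sq]
      simp only [this]
      rw [sum_pmeas_single r j (fun b => ((if b then (1:ℝ) else 0) - r j) ^ 2)]
      norm_num
      try ring
    · have hne : i ≠ j := fun h => hij h.symm
      rw [sum_pmeas_pair r hne (fun b => (if b then (1:ℝ) else 0) - r i)
        (fun b => (if b then (1:ℝ) else 0) - r j)]
      rw [if_neg hij]
      have e : ((1 - r i) * ((if (false:Bool) then (1:ℝ) else 0) - r i)
          + r i * ((if (true:Bool) then (1:ℝ) else 0) - r i)) = 0 := by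
        norm_num
        ring
      rw [e, zero_mul]
  simp only [inner]
  refine Finset.sum_congr rfl fun i _ => ?_
  simp

/-- Chebyshev-type bound for the Hamming weight under `pmeas r`. -/
lemma pmeas_cheb {n : ℕ} (r : Fin n → ℝ) (hr : ∀ i, 0 ≤ r i ∧ r i ≤ 1)
    (t : ℝ) (ht : 0 < t) (A : BV n → Prop) [DecidablePred A]
    (hA : ∀ z, A z → t ≤ |(wt z : ℝ) - ∑ i, r i|) :
    ∑ z : BV n, pmeas r z * (if A z then (1:ℝ) else 0)
      ≤ (∑ i, r i * (1 - r i)) / t ^ 2 := by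
  have hle : ∀ z : BV n, pmeas r z * (if A z then (1:ℝ) else 0)
      ≤ pmeas r z * (((wt z : ℝ) - ∑ i, r i) ^ 2 / t ^ 2) := by
    intro z
    refine mul_le_mul_of_nonneg_left ?_ (pmeas_nonneg hr z)
    by_cases hz : A z
    · simp only [hz, if_true]
      rw [le_div_iff₀ (by positivity), one_mul]
      have := hA z hz
      calc t ^ 2 ≤ |(wt z : ℝ) - ∑ i, r i| ^ 2 := by
            exact pow_le_pow_left₀ ht.le this 2
        _ = ((wt z : ℝ) - ∑ i, r i) ^ 2 := sq_abs _
    · simp only [hz, if_false]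
      positivity
  calc ∑ z : BV n, pmeas r z * (if A z then (1:ℝ) else 0)
      ≤ ∑ z : BV n, pmeas r z * (((wt z : ℝ) - ∑ i, r i) ^ 2 / t ^ 2) :=
        Finset.sum_le_sum fun z _ => hle z
    _ = (∑ i, r i * (1 - r i)) / t ^ 2 := by
        simp only [← mul_div_assoc]
        rw [← Finset.sum_div, sum_pmeas_var]

/-! ### Binomial point masses -/

/-- The binomial point mass `C(n,w) q^w (1-q)^(n-w)`. -/
noncomputable def binP (n : ℕ) (q : ℝ) (w : ℕ) : ℝ :=
  (n.choose w : ℝ) * (q ^ w * (1 - q) ^ (n - w))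

lemma binP_nonneg {n w : ℕ} {q : ℝ} (hq0 : 0 ≤ q) (hq1 : q ≤ 1) :
    0 ≤ binP n q w := by
  have h : (0:ℝ) ≤ 1 - q := by linarith
  exact mul_nonneg (Nat.cast_nonneg _) (mul_nonneg (pow_nonneg hq0 _) (pow_nonneg h _))

lemma noiseP_eq_pow {n : ℕ} (q : ℝ) (z : BV n) :
    noiseP q z = q ^ wt z * (1 - q) ^ (n - wt z) := by
  classical
  rw [noiseP, Finset.prod_ite]
  simp only [Finset.prod_const]
  have h1 : (Finset.univ.filter fun i => z i = true).card = wt z := rfl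
  have h2 : (Finset.univ.filter fun i => ¬ z i = true).card = n - wt z := by
    have := Finset.card_filter_add_card_filter_not
      (s := (Finset.univ : Finset (Fin n))) (p := fun i => z i = true)
    simp only [Finset.card_univ, Fintype.card_fin] at this
    omega
  rw [h1, h2]

lemma card_wt_eq {n : ℕ} (w : ℕ) :
    (Finset.univ.filter fun z : BV n => wt z = w).card = n.choose w := by
  classical
  have := Finset.card_powersetCard w (Finset.univ : Finset (Fin n))
  rw [Finset.card_univ, Fintype.card_fin] at this
  rw [← this]
  refine Finset.card_bij' (fun z _ => Finset.univ.filter fun i => z i = true)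
    (fun s _ => fun i => decide (i ∈ s)) ?_ ?_ ?_ ?_
  · intro z hz
    rw [Finset.mem_powersetCard]
    refine ⟨Finset.filter_subset _ _, ?_⟩
    exact (Finset.mem_filter.1 hz).2
  · intro s hs
    rw [Finset.mem_powersetCard] at hs
    rw [Finset.mem_filter]
    refine ⟨Finset.mem_univ _, ?_⟩
    rw [wt]
    rw [show (Finset.univ.filter fun i => decide (i ∈ s) = true) = s by
      ext i; simp]
    exact hs.2
  · intro z hz
    funext i
    simp
  · intro s hs
    ext i
    simp

lemma sum_noiseP_wt_eq {n : ℕ} (q : ℝ) (w : ℕ) :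
    ∑ z : BV n, noiseP q z * (if wt z = w then (1:ℝ) else 0) = binP n q w := by
  classical
  by_cases hw : w ≤ n
  · have key : ∀ z : BV n, noiseP q z * (if wt z = w then (1:ℝ) else 0)
        = if wt z = w then q ^ w * (1 - q) ^ (n - w) else 0 := by
      intro z
      by_cases h : wt z = w
      · simp [h, noiseP_eq_pow]
      · simp [h]
    simp only [key]
    rw [← Finset.sum_filter, Finset.sum_const, nsmul_eq_mul, card_wt_eq, binP]
  · have key : ∀ z : BV n, noiseP q z * (if wt z = w then (1:ℝ) else 0) = 0 := by
      intro z
      have : wt z ≠ w := fun h => hw (h ▸ wt_le z)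
      simp [this]
    simp only [key, Finset.sum_const_zero]
    rw [binP, Nat.choose_eq_zero_of_lt (by omega)]
    simp

lemma binP_key {n w : ℕ} (q : ℝ) (hw : w + 1 ≤ n) :
    binP n q w * (((n:ℝ) - w) * q) = binP n q (w + 1) * (((w:ℝ) + 1) * (1 - q)) := by
  have hchoose : (n.choose (w+1) : ℝ) * ((w:ℝ)+1) = (n.choose w : ℝ) * ((n:ℝ) - w) := by
    have h := Nat.choose_succ_right_eq n w
    have hcast := congrArg (fun m : ℕ => (m : ℝ)) h
    push_cast [Nat.cast_sub (by omega : w ≤ n)] at hcast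
    linarith
  have hpow : (1 - q) ^ (n - w) = (1 - q) ^ (n - (w+1)) * (1 - q) := by
    rw [← pow_succ]
    congr 1
    omega
  rw [binP, binP, hpow, pow_succ]
  linear_combination (-(q ^ w * q * (1 - q) ^ (n - (w+1)) * (1 - q))) * hchoose

lemma binP_step_ineq {n w : ℕ} {q ρ : ℝ} (hq0 : 0 < q) (hq1 : q < 1)
    (hw : w + 1 ≤ n) (hρ : 0 ≤ ρ)
    (hcross : ρ * (((n:ℝ) - w) * q) ≤ ((w:ℝ) + 1) * (1 - q)) :
    ρ * binP n q (w + 1) ≤ binP n q w := by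
  have hden : (0:ℝ) < ((n:ℝ) - w) * q := by
    have : (w:ℝ) + 1 ≤ n := by exact_mod_cast hw
    have : (0:ℝ) < (n:ℝ) - w := by linarith
    positivity
  rw [← mul_le_mul_iff_left₀ hden]
  calc ρ * binP n q (w+1) * (((n:ℝ) - w) * q)
      = binP n q (w+1) * (ρ * (((n:ℝ) - w) * q)) := by ring
    _ ≤ binP n q (w+1) * (((w:ℝ) + 1) * (1 - q)) := by
        refine mul_le_mul_of_nonneg_left hcross (binP_nonneg hq0.le hq1.le)
    _ = binP n q w * (((n:ℝ) - w) * q) := (binP_key q hw).symm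

lemma binP_chain {n : ℕ} {q ρ lo : ℝ} (hq0 : 0 < q) (hq1 : q < 1) (hρ : 0 ≤ ρ)
    (hstep : ∀ w : ℕ, lo ≤ (w:ℝ) + 1 → w + 1 ≤ n → ρ * binP n q (w+1) ≤ binP n q w) :
    ∀ (d v : ℕ), lo ≤ (v:ℝ) + 1 → v + d ≤ n →
      ρ ^ d * binP n q (v + d) ≤ binP n q v := by
  intro d
  induction d with
  | zero => intro v _ _; simp
  | succ d ih =>
    intro v hv hvd
    have h1 : ρ ^ (d+1) * binP n q (v + (d+1)) = ρ ^ d * (ρ * binP n q ((v + d) + 1)) := by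
      rw [show v + (d+1) = (v + d) + 1 by omega]
      ring
    rw [h1]
    have hstep' : ρ * binP n q ((v+d)+1) ≤ binP n q (v+d) := by
      refine hstep (v+d) ?_ (by omega)
      have hd0 : (0:ℝ) ≤ (d:ℝ) := Nat.cast_nonneg d
      push_cast
      push_cast at hv
      linarith
    calc ρ ^ d * (ρ * binP n q ((v+d)+1)) ≤ ρ ^ d * binP n q (v+d) :=
          mul_le_mul_of_nonneg_left hstep' (pow_nonneg hρ d)
      _ ≤ binP n q v := ih v hv (by omega)

/-! ### Noise measure facts -/

lemma noiseP_nonneg {n : ℕ} {q : ℝ} (hq0 : 0 ≤ q) (hq1 : q ≤ 1) (z : BV n) :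
    0 ≤ noiseP q z :=
  pmeas_nonneg (fun _ => ⟨hq0, hq1⟩) z

lemma sum_noiseP {n : ℕ} (q : ℝ) : ∑ z : BV n, noiseP q z = 1 := sum_pmeas _

lemma noiseP_cheb {n : ℕ} {q : ℝ} (hq0 : 0 ≤ q) (hq1 : q ≤ 1) (t : ℝ) (ht : 0 < t)
    (A : BV n → Prop) [DecidablePred A]
    (hA : ∀ z, A z → t ≤ |(wt z : ℝ) - q * n|) :
    ∑ z : BV n, noiseP q z * (if A z then (1:ℝ) else 0)
      ≤ (n : ℝ) * (q * (1 - q)) / t ^ 2 := by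
  have hmean : (∑ i : Fin n, (fun _ : Fin n => q) i) = q * n := by
    simp [mul_comm]
  have h := pmeas_cheb (n := n) (fun _ => q) (fun _ => ⟨hq0, hq1⟩) t ht A
    (by rw [hmean]; exact hA)
  calc (∑ z : BV n, noiseP q z * if A z then (1:ℝ) else 0)
      ≤ (∑ i : Fin n, (fun _ : Fin n => q) i * (1 - (fun _ : Fin n => q) i)) / t ^ 2 := h
    _ = (n : ℝ) * (q * (1 - q)) / t ^ 2 := by
        rw [Finset.sum_const, Finset.card_univ, Fintype.card_fin, nsmul_eq_mul]

lemma sum_noiseP_mem {n : ℕ} (q : ℝ) (S : Finset ℕ) :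
    ∑ z : BV n, noiseP q z * (if wt z ∈ S then (1:ℝ) else 0)
      = ∑ w ∈ S, binP n q w := by
  classical
  have key : ∀ z : BV n, noiseP q z * (if wt z ∈ S then (1:ℝ) else 0)
      = ∑ w ∈ S, noiseP q z * (if wt z = w then (1:ℝ) else 0) := by
    intro z
    rw [← Finset.mul_sum]
    congr 1
    rw [Finset.sum_ite_eq S (wt z) (fun _ => (1:ℝ))]
  simp only [key]
  rw [Finset.sum_comm]
  exact Finset.sum_congr rfl fun w _ => sum_noiseP_wt_eq q w

lemma sum_noiseP_mono {n : ℕ} {q : ℝ} (hq0 : 0 ≤ q) (hq1 : q ≤ 1)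
    {P Q : BV n → Prop} [DecidablePred P] [DecidablePred Q] (h : ∀ z, P z → Q z) :
    ∑ z : BV n, noiseP q z * (if P z then (1:ℝ) else 0)
      ≤ ∑ z : BV n, noiseP q z * (if Q z then (1:ℝ) else 0) := by
  refine Finset.sum_le_sum fun z _ => ?_
  refine mul_le_mul_of_nonneg_left ?_ (noiseP_nonneg hq0 hq1 z)
  by_cases hz : P z
  · simp [hz, h z hz]
  · by_cases hz' : Q z <;> simp [hz, hz']

/-! ### Anticoncentration of the binomial below its mean -/

set_option maxHeartbeats 1000000 in
lemma anticonc {q : ℝ} (hq0 : 0 < q) (hq2 : q < 1/2) (c : ℝ) (hc : 0 < c) :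
    ∃ δ : ℝ, 0 < δ ∧ ∃ n0 : ℕ, ∀ n : ℕ, n0 ≤ n → ∀ t : ℝ,
      q * n - c * Real.sqrt n ≤ t →
      δ ≤ ∑ z : BV n, noiseP q z * (if (wt z : ℝ) ≤ t then (1:ℝ) else 0) := by
  classical
  have hq1 : q < 1 := by linarith
  have hq1' : (0:ℝ) < 1 - q := by linarith
  set L : ℝ := c + 4 with hLdef
  have hL0 : 0 < L := by linarith
  set A : ℝ := (L + 1) / (q * (1 - q)) with hAdef
  have hA0 : 0 < A := by positivity
  refine ⟨(3/16) * Real.exp (-(2*A*L + 2*A)), by positivity, ?_⟩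
  set Cst : ℝ := 1 + 2*A + (L+1)/q with hCdef
  have hLq0 : (0:ℝ) ≤ (L+1)/q := div_nonneg (by linarith) hq0.le
  refine ⟨⌈Cst^2⌉₊, ?_⟩
  intro n hn t ht
  set s := Real.sqrt n with hsdef
  have hs0' : 0 ≤ s := Real.sqrt_nonneg _
  have hns : (n:ℝ) = s * s := (Real.mul_self_sqrt (Nat.cast_nonneg n)).symm
  have hCpos : 0 < Cst := by positivity
  have hsC : Cst ≤ s := by
    rw [hsdef]
    rw [show Cst = Real.sqrt (Cst^2) by rw [Real.sqrt_sq hCpos.le]]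
    exact Real.sqrt_le_sqrt (by exact_mod_cast Nat.ceil_le.1 hn)
  have hs1 : 1 ≤ s := by
    refine le_trans ?_ hsC
    rw [hCdef]
    linarith [hA0.le]
  have hs0 : 0 < s := lt_of_lt_of_le one_pos hs1
  have hAs : 2*A ≤ s := by
    refine le_trans ?_ hsC
    rw [hCdef]
    linarith
  have hqsL : L + 1 ≤ q * s := by
    have h1 : (L+1)/q ≤ s := by
      refine le_trans ?_ hsC
      rw [hCdef]
      linarith [hA0.le]
    rw [div_le_iff₀ hq0] at h1
    linarith [mul_comm q s]
  have hqn : q * (n:ℝ) = (q*s)*s := by rw [hns]; ring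
  have hcs0 : (0:ℝ) ≤ c*s := by positivity
  have hqn5 : (c+5)*s ≤ q*(n:ℝ) := by
    have h1 : (L+1)*s ≤ (q*s)*s := mul_le_mul_of_nonneg_right hqsL hs0.le
    rw [hLdef] at h1
    linarith
  -- mass within s of the mean
  set Sfin := (Finset.range (n+1)).filter (fun w : ℕ => |(w:ℝ) - q*(n:ℝ)| ≤ s) with hSdef
  have hmem_iff : ∀ z : BV n, (wt z ∈ Sfin) ↔ |((wt z : ℕ):ℝ) - q*(n:ℝ)| ≤ s := by
    intro z
    simp only [hSdef, Finset.mem_filter, Finset.mem_range, Nat.lt_succ_iff]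
    exact ⟨fun h => h.2, fun h => ⟨wt_le z, h⟩⟩
  have hcheb : ∑ z : BV n, noiseP q z * (if ¬ (|((wt z : ℕ):ℝ) - q*(n:ℝ)| ≤ s) then (1:ℝ) else 0)
      ≤ q * (1 - q) := by
    have h := noiseP_cheb (n := n) hq0.le hq1.le s hs0
      (fun z => ¬ (|((wt z : ℕ):ℝ) - q*(n:ℝ)| ≤ s))
      (fun z hz => le_of_lt (not_le.1 hz))
    calc ∑ z : BV n, noiseP q z * (if ¬ (|((wt z : ℕ):ℝ) - q*(n:ℝ)| ≤ s) then (1:ℝ) else 0)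
        ≤ (n : ℝ) * (q * (1 - q)) / s ^ 2 := h
      _ = q * (1 - q) := by rw [hns]; field_simp
  have hmass : 3/4 ≤ ∑ w ∈ Sfin, binP n q w := by
    rw [← sum_noiseP_mem]
    have hsplit : ∀ z : BV n, noiseP q z * (if wt z ∈ Sfin then (1:ℝ) else 0)
        = noiseP q z - noiseP q z * (if ¬ (|((wt z : ℕ):ℝ) - q*(n:ℝ)| ≤ s) then (1:ℝ) else 0) := by
      intro z
      by_cases h : |((wt z : ℕ):ℝ) - q*(n:ℝ)| ≤ s
      · simp [(hmem_iff z).2 h, h]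
      · have hnot : wt z ∉ Sfin := fun hh => h ((hmem_iff z).1 hh)
        simp [hnot, h]
    rw [Finset.sum_congr rfl (fun z _ => hsplit z), Finset.sum_sub_distrib, sum_noiseP]
    have hq14 : q * (1 - q) ≤ 1/4 := by linarith [sq_nonneg (q - 1/2)]
    linarith
  -- a heavy point
  have hSne : Sfin.Nonempty := by
    rcases Finset.eq_empty_or_nonempty Sfin with h | h
    · rw [h] at hmass; simp at hmass; linarith
    · exact h
  have hcardpos : (0:ℝ) < (Sfin.card : ℝ) := by
    exact_mod_cast Finset.card_pos.2 hSne
  have hcard : (Sfin.card : ℝ) ≤ 2*s + 2 := by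
    set a := ⌈q*(n:ℝ) - s⌉₊ with hadef
    set b := ⌊q*(n:ℝ) + s⌋₊ with hbdef
    have hsub : Sfin ⊆ Finset.Icc a b := by
      intro w hw
      simp only [hSdef, Finset.mem_filter] at hw
      have habs := abs_le.1 hw.2
      rw [Finset.mem_Icc]
      constructor
      · exact Nat.ceil_le.2 (by linarith)
      · exact Nat.le_floor (by linarith)
    calc (Sfin.card : ℝ) ≤ ((Finset.Icc a b).card : ℝ) :=
          Nat.cast_le.2 (Finset.card_le_card hsub)
      _ = ((b + 1 - a : ℕ) : ℝ) := by rw [Nat.card_Icc]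
      _ ≤ 2*s + 2 := by
          by_cases hab : a ≤ b + 1
          · rw [Nat.cast_sub hab]
            have h1 : (b:ℝ) ≤ q*(n:ℝ) + s := Nat.floor_le (by positivity)
            have h2 : q*(n:ℝ) - s ≤ (a:ℝ) := Nat.le_ceil _
            push_cast
            linarith
          · rw [Nat.sub_eq_zero_of_le (by omega)]
            simp only [Nat.cast_zero]
            positivity
  obtain ⟨wstar, hwS, hwbig⟩ : ∃ w ∈ Sfin, (3/4)/(Sfin.card : ℝ) ≤ binP n q w := by
    refine Finset.exists_le_of_sum_le hSne ?_
    rw [Finset.sum_const, nsmul_eq_mul, mul_div_cancel₀ _ (ne_of_gt hcardpos)]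
    exact hmass
  have hwstar : (3/16)/s ≤ binP n q wstar := by
    refine le_trans ?_ hwbig
    rw [div_le_div_iff₀ hs0 hcardpos]
    calc (3:ℝ)/16 * Sfin.card ≤ (3/16) * (2*s+2) := by
          exact mul_le_mul_of_nonneg_left hcard (by norm_num)
      _ ≤ 3/4 * s := by linarith
  have hwn : wstar ≤ n := by
    have := (Finset.mem_filter.1 hwS).1
    rw [Finset.mem_range] at this
    omega
  have hwabs := (Finset.mem_filter.1 hwS).2
  have hwlo : q*(n:ℝ) - s ≤ (wstar:ℝ) := by
    have := (abs_le.1 hwabs).1; linarith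
  have hwhi : (wstar:ℝ) ≤ q*(n:ℝ) + s := by
    have := (abs_le.1 hwabs).2; linarith
  -- the block of small weights
  have hqn_cs : 0 ≤ q*(n:ℝ) - c*s := by linarith [hqn5, hs0']
  set v1 := ⌊q*(n:ℝ) - c*s⌋₊ with hv1def
  have hv1le : (v1:ℝ) ≤ q*(n:ℝ) - c*s := Nat.floor_le hqn_cs
  have hv1gt : q*(n:ℝ) - c*s - 1 < (v1:ℝ) := by
    have := Nat.lt_floor_add_one (q*(n:ℝ) - c*s); linarith
  set v0 := min wstar v1 with hv0def
  set M := ⌊s⌋₊ with hMdef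
  have hMs : (M:ℝ) ≤ s := Nat.floor_le hs0.le
  have hsM : s < (M:ℝ) + 1 := Nat.lt_floor_add_one s
  have hv0lo : q*(n:ℝ) - (c+1)*s - 1 ≤ (v0:ℝ) := by
    rw [hv0def]
    rcases min_choice wstar v1 with h | h <;> rw [h]
    · linarith
    · linarith
  have hMv0 : M ≤ v0 := by
    have : (M:ℝ) ≤ (v0:ℝ) := by linarith [hv0lo, hqn5, hMs, hs1]
    exact_mod_cast this
  set Bk := Finset.Icc (v0 - M) v0 with hBkdef
  -- chain step hypothesis
  set ρ : ℝ := 1 - A/s with hρdef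
  have hxle : A/s ≤ 1/2 := by
    rw [div_le_iff₀ hs0]; linarith
  have hx0 : 0 ≤ A/s := by positivity
  have hρ0 : 0 ≤ ρ := by rw [hρdef]; linarith
  have hρ1 : ρ ≤ 1 := by rw [hρdef]; linarith
  have hAq : A * (q * (1-q)) = L + 1 := by
    rw [hAdef]; field_simp
  have hstep : ∀ w : ℕ, q*(n:ℝ) - L*s ≤ (w:ℝ) + 1 → w + 1 ≤ n →
      ρ * binP n q (w+1) ≤ binP n q w := by
    intro w hw1 hwn'
    refine binP_step_ineq hq0 hq1 hwn' hρ0 ?_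
    have hnw : ((n:ℝ) - w) * q ≤ q * ((1-q)*(n:ℝ) + L*s + 1) := by
      have hw' : (n:ℝ) - w ≤ (1-q)*(n:ℝ) + L*s + 1 := by linarith
      have := mul_le_mul_of_nonneg_right hw' hq0.le
      linarith [this]
    have hnum : (1-q) * (q*(n:ℝ) - L*s) ≤ ((w:ℝ) + 1) * (1 - q) := by
      have := mul_le_mul_of_nonneg_right hw1 hq1'.le
      linarith [this]
    have hkey : ρ * (q * ((1-q)*(n:ℝ) + L*s + 1)) ≤ (1-q) * (q*(n:ℝ) - L*s) := by
      have hden_lo : q*(1-q)*(n:ℝ) ≤ q * ((1-q)*(n:ℝ) + L*s + 1) := by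
        have h1 : (0:ℝ) ≤ q*(L*s) := by positivity
        linarith [h1, hq0.le]
      have hAsden : (L+1)*s ≤ (A/s) * (q * ((1-q)*(n:ℝ) + L*s + 1)) := by
        have he : (A/s) * (q*(1-q)*(n:ℝ)) = A * (q*(1-q)) * s := by
          rw [hns]; field_simp
        have h2 : (L+1)*s ≤ (A/s) * (q*(1-q)*(n:ℝ)) := by
          rw [he, hAq]
        exact le_trans h2 (mul_le_mul_of_nonneg_left hden_lo hx0)
      have hdiff : q * ((1-q)*(n:ℝ) + L*s + 1) - (1-q) * (q*(n:ℝ) - L*s)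
          = L*s + q := by ring
      rw [hρdef]
      linarith [hAsden, hdiff]
    calc ρ * (((n:ℝ) - w) * q) ≤ ρ * (q * ((1-q)*(n:ℝ) + L*s + 1)) :=
          mul_le_mul_of_nonneg_left hnw hρ0
      _ ≤ (1-q) * (q*(n:ℝ) - L*s) := hkey
      _ ≤ ((w:ℝ) + 1) * (1 - q) := hnum
  -- lower bound for ρ-powers
  have hρd : ∀ d : ℕ, (d:ℝ) ≤ L*s → Real.exp (-(2*A*L + 2*A)) ≤ ρ ^ d := by
    intro d hd
    set D := ⌊L*s⌋₊ + 1 with hDdef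
    have hdD : d ≤ D := by
      have : d ≤ ⌊L*s⌋₊ := Nat.le_floor hd
      omega
    have hDle : (D:ℝ) ≤ L*s + 1 := by
      rw [hDdef]; push_cast
      have := Nat.floor_le (by positivity : (0:ℝ) ≤ L*s)
      linarith
    have hexpρ : Real.exp (-(2*(A/s))) ≤ ρ := by
      have h1 : 1 + 2*(A/s) ≤ Real.exp (2*(A/s)) := by
        have := Real.add_one_le_exp (2*(A/s)); linarith
      have h3 : (Real.exp (2*(A/s)))⁻¹ ≤ (1 + 2*(A/s))⁻¹ := by
        exact inv_anti₀ (by positivity) h1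
      have h4 : (1 + 2*(A/s))⁻¹ ≤ ρ := by
        rw [inv_eq_one_div, div_le_iff₀ (by positivity)]
        rw [hρdef]
        have hxx : 0 ≤ (A/s) * (1 - 2*(A/s)) := mul_nonneg hx0 (by linarith)
        linarith [hxx]
      rw [← Real.exp_neg] at h3
      exact le_trans h3 h4
    have h7 : A/s ≤ A := by
      rw [div_le_iff₀ hs0]
      have := mul_le_mul_of_nonneg_left hs1 hA0.le
      linarith [this]
    calc Real.exp (-(2*A*L + 2*A)) ≤ Real.exp ((D:ℝ) * (-(2*(A/s)))) := by
          refine Real.exp_le_exp.2 ?_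
          have h5 : (D:ℝ) * (2*(A/s)) ≤ (L*s+1) * (2*(A/s)) := by
            refine mul_le_mul_of_nonneg_right hDle (by positivity)
          have h6 : (L*s+1) * (2*(A/s)) = 2*A*L + 2*(A/s) := by
            field_simp
          linarith [h5, h6, h7]
      _ = (Real.exp (-(2*(A/s)))) ^ D := by
          rw [← Real.exp_nat_mul]
      _ ≤ ρ ^ D := pow_le_pow_left₀ (Real.exp_nonneg _) hexpρ D
      _ ≤ ρ ^ d := pow_le_pow_of_le_one hρ0 hρ1 hdD
  have hL4 : L*s = c*s + 4*s := by rw [hLdef]; ring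
  have hblock : ∀ v ∈ Bk, (3/16) * Real.exp (-(2*A*L + 2*A)) / s ≤ binP n q v := by
    intro v hv
    rw [hBkdef, Finset.mem_Icc] at hv
    have hvv0 : (v0:ℝ) - M ≤ (v:ℝ) := by
      have h0 : ((v0 - M : ℕ):ℝ) = (v0:ℝ) - M := by
        rw [Nat.cast_sub hMv0]
      have h2 : ((v0 - M : ℕ):ℝ) ≤ (v:ℝ) := Nat.cast_le.2 hv.1
      linarith
    have hvw : v ≤ wstar := le_trans hv.2 (min_le_left _ _)
    set d := wstar - v with hddef
    have hvd : v + d = wstar := by omega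
    have hdcast : (d:ℝ) = (wstar:ℝ) - (v:ℝ) := by
      rw [hddef, Nat.cast_sub hvw]
    have hvlo : q*(n:ℝ) - (c+2)*s - 1 ≤ (v:ℝ) := by linarith
    have hdle : (d:ℝ) ≤ L*s := by
      rw [hdcast]
      linarith
    have hchain : ρ ^ d * binP n q (v + d) ≤ binP n q v := by
      refine binP_chain hq0 hq1 hρ0 hstep d v ?_ (by omega)
      linarith
    rw [hvd] at hchain
    have h1 : Real.exp (-(2*A*L + 2*A)) * ((3/16)/s) ≤ ρ ^ d * binP n q wstar := by
      refine mul_le_mul (hρd d hdle) hwstar (by positivity) (pow_nonneg hρ0 d)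
    calc (3/16) * Real.exp (-(2*A*L + 2*A)) / s
        = Real.exp (-(2*A*L + 2*A)) * ((3/16)/s) := by ring
      _ ≤ ρ ^ d * binP n q wstar := h1
      _ ≤ binP n q v := hchain
  -- assemble
  have hBk_t : ∀ z : BV n, wt z ∈ Bk → ((wt z : ℕ):ℝ) ≤ t := by
    intro z hz
    rw [hBkdef, Finset.mem_Icc] at hz
    have h1 : ((wt z : ℕ) : ℝ) ≤ (v0:ℝ) := Nat.cast_le.2 hz.2
    have h2 : (v0:ℝ) ≤ (v1:ℝ) := Nat.cast_le.2 (min_le_right _ _)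
    linarith
  have hE : (0:ℝ) < Real.exp (-(2*A*L + 2*A)) := Real.exp_pos _
  calc (3/16) * Real.exp (-(2*A*L + 2*A))
      ≤ ∑ w ∈ Bk, binP n q w := by
        have hcardBk : Bk.card = M + 1 := by
          rw [hBkdef, Nat.card_Icc]; omega
        calc (3/16) * Real.exp (-(2*A*L + 2*A))
            ≤ ((M:ℝ)+1) * ((3/16) * Real.exp (-(2*A*L + 2*A)) / s) := by
              have h9 : s * ((3/16) * Real.exp (-(2*A*L + 2*A)) / s)
                  = (3/16) * Real.exp (-(2*A*L + 2*A)) := by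
                rw [mul_comm]
                exact div_mul_cancel₀ _ (ne_of_gt hs0)
              have h11 : s * ((3/16) * Real.exp (-(2*A*L + 2*A)) / s)
                  ≤ ((M:ℝ)+1) * ((3/16) * Real.exp (-(2*A*L + 2*A)) / s) :=
                mul_le_mul_of_nonneg_right hsM.le (by positivity)
              linarith
          _ ≤ ∑ w ∈ Bk, binP n q w := by
              have h10 := Finset.card_nsmul_le_sum Bk (binP n q)
                ((3/16) * Real.exp (-(2*A*L + 2*A)) / s) hblock
              rw [hcardBk, nsmul_eq_mul] at h10
              push_cast at h10
              linarith
    _ = ∑ z : BV n, noiseP q z * (if wt z ∈ Bk then (1:ℝ) else 0) :=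
        (sum_noiseP_mem q Bk).symm
    _ ≤ ∑ z : BV n, noiseP q z * (if ((wt z : ℕ):ℝ) ≤ t then (1:ℝ) else 0) :=
        sum_noiseP_mono hq0.le hq1.le hBk_t

/-! ### Facts about codeword-shifted noise, detectors, and error quantities -/

lemma noiseP_vxor_eq {n : ℕ} (q : ℝ) (x z : BV n) :
    noiseP q (vxor z x) = pmeas (fun i => if x i then 1 - q else q) z := by
  rw [noiseP, pmeas]
  refine Finset.prod_congr rfl fun i _ => ?_
  cases hz : z i <;> cases hx : x i <;> simp [vxor, hz, hx]

lemma sum_rx {n : ℕ} (q : ℝ) (x : BV n) :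
    ∑ i, (if x i then 1 - q else q) = q * (n:ℝ) + (1 - 2*q) * (wt x : ℝ) := by
  classical
  have h : ∀ i, (if x i then 1 - q else q)
      = q + (1 - 2*q) * (if x i then (1:ℝ) else 0) := by
    intro i; by_cases hx : x i <;> simp [hx] <;> ring
  rw [Finset.sum_congr rfl (fun i _ => h i), Finset.sum_add_distrib,
    Finset.sum_const, ← Finset.mul_sum, ← wt_eq_sum, Finset.card_univ,
    Fintype.card_fin, nsmul_eq_mul, mul_comm (n:ℝ) q]

lemma var_rx {n : ℕ} (q : ℝ) (x : BV n) :
    ∑ i, (fun i => if x i then 1 - q else q) i * (1 - (fun i => if x i then 1 - q else q) i)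
      = (n:ℝ) * (q * (1 - q)) := by
  have h : ∀ i : Fin n, (fun i => if x i then 1 - q else q) i *
      (1 - (fun i => if x i then 1 - q else q) i) = q * (1 - q) := by
    intro i; by_cases hx : x i <;> simp [hx] <;> ring
  rw [Finset.sum_congr rfl (fun i _ => h i), Finset.sum_const, Finset.card_univ,
    Fintype.card_fin, nsmul_eq_mul]

lemma PFA_thresh {n : ℕ} {q a : ℝ} (hq0 : 0 ≤ q) (hq1 : q ≤ 1)
    (hpos : 0 < a * Real.sqrt n) :
    PFA q (fun z : BV n => decide (q*(n:ℝ) + a*Real.sqrt n ≤ ((wt z : ℕ):ℝ)))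
      ≤ (n:ℝ) * (q*(1-q)) / (a*Real.sqrt n)^2 := by
  classical
  rw [PFA]
  have h : ∀ z : BV n,
      (if (fun z : BV n => decide (q*(n:ℝ) + a*Real.sqrt n ≤ ((wt z : ℕ):ℝ))) z
        then (1:ℝ) else 0)
      = (if q*(n:ℝ) + a*Real.sqrt n ≤ ((wt z : ℕ):ℝ) then (1:ℝ) else 0) := by
    intro z; simp
  rw [Finset.sum_congr rfl (fun z _ => by rw [h z])]
  refine noiseP_cheb hq0 hq1 _ hpos _ ?_
  intro z hz
  have h2 : a*Real.sqrt n ≤ ((wt z : ℕ):ℝ) - q*n := by linarith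
  exact le_trans h2 (le_abs_self _)

lemma MD_thresh {n : ℕ} {q a : ℝ} (hq0 : 0 ≤ q) (hq1 : q ≤ 1) (x : BV n)
    (hpos : 0 < a * Real.sqrt n)
    (hheavy : 2*(a*Real.sqrt n) ≤ (1 - 2*q) * (wt x : ℝ)) :
    ∑ z : BV n, noiseP q (vxor z x) *
        (if (fun z : BV n => decide (q*(n:ℝ) + a*Real.sqrt n ≤ ((wt z : ℕ):ℝ))) z
          then (0:ℝ) else 1)
      ≤ (n:ℝ) * (q*(1-q)) / (a*Real.sqrt n)^2 := by
  classical
  set r : Fin n → ℝ := fun i => if x i then 1 - q else q with hrdef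
  have hr : ∀ i, 0 ≤ r i ∧ r i ≤ 1 := by
    intro i
    by_cases hx : x i <;> constructor <;> simp [hrdef, hx] <;> linarith
  have h : ∀ z : BV n, noiseP q (vxor z x) *
      (if (fun z : BV n => decide (q*(n:ℝ) + a*Real.sqrt n ≤ ((wt z : ℕ):ℝ))) z
        then (0:ℝ) else 1)
      = pmeas r z * (if ¬ (q*(n:ℝ) + a*Real.sqrt n ≤ ((wt z : ℕ):ℝ)) then (1:ℝ) else 0) := by
    intro z
    rw [noiseP_vxor_eq]
    congr 1
    by_cases hz : q*(n:ℝ) + a*Real.sqrt n ≤ ((wt z : ℕ):ℝ) <;> simp [hz]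
  rw [Finset.sum_congr rfl (fun z _ => h z)]
  have hvar := var_rx q x
  have hmean := sum_rx q x
  calc ∑ z : BV n, pmeas r z *
        (if ¬ (q*(n:ℝ) + a*Real.sqrt n ≤ ((wt z : ℕ):ℝ)) then (1:ℝ) else 0)
      ≤ (∑ i, r i * (1 - r i)) / (a*Real.sqrt n)^2 := by
        refine pmeas_cheb r hr _ hpos _ ?_
        intro z hz
        rw [not_le] at hz
        have hm : q*(n:ℝ) + 2*(a*Real.sqrt n) ≤ ∑ i, r i := by
          rw [hrdef, sum_rx]
          linarith
        have h3 : a*Real.sqrt n ≤ (∑ i, r i) - ((wt z : ℕ):ℝ) := by linarith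
        calc a*Real.sqrt n ≤ (∑ i, r i) - ((wt z : ℕ):ℝ) := h3
          _ ≤ |(∑ i, r i) - ((wt z : ℕ):ℝ)| := le_abs_self _
          _ = |((wt z : ℕ):ℝ) - ∑ i, r i| := abs_sub_comm _ _
    _ = (n:ℝ) * (q*(1-q)) / (a*Real.sqrt n)^2 := by rw [hvar]

lemma MD_le_one {n : ℕ} {q : ℝ} (hq0 : 0 ≤ q) (hq1 : q ≤ 1) (x : BV n)
    (f : BV n → ℝ) (hf : ∀ z, 0 ≤ f z ∧ f z ≤ 1) :
    ∑ z : BV n, noiseP q (vxor z x) * f z ≤ 1 := by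
  classical
  set r : Fin n → ℝ := fun i => if x i then 1 - q else q with hrdef
  have hr : ∀ i, 0 ≤ r i ∧ r i ≤ 1 := by
    intro i
    by_cases hx : x i <;> constructor <;> simp [hrdef, hx] <;> linarith
  have h : ∀ z : BV n, noiseP q (vxor z x) * f z ≤ pmeas r z := by
    intro z
    rw [noiseP_vxor_eq]
    calc pmeas r z * f z ≤ pmeas r z * 1 :=
          mul_le_mul_of_nonneg_left (hf z).2 (pmeas_nonneg hr z)
      _ = pmeas r z := mul_one _
  calc ∑ z : BV n, noiseP q (vxor z x) * f z ≤ ∑ z : BV n, pmeas r z :=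
        Finset.sum_le_sum fun z _ => h z
    _ = 1 := sum_pmeas r

lemma MD_nonneg {n : ℕ} {q : ℝ} (hq0 : 0 ≤ q) (hq1 : q ≤ 1) (x : BV n)
    (f : BV n → ℝ) (hf : ∀ z, 0 ≤ f z) :
    0 ≤ ∑ z : BV n, noiseP q (vxor z x) * f z := by
  classical
  refine Finset.sum_nonneg fun z _ => mul_nonneg ?_ (hf z)
  rw [noiseP_vxor_eq]
  refine pmeas_nonneg ?_ z
  intro i
  by_cases hx : x i <;> constructor <;> simp [hx] <;> linarith

lemma PFA_nonneg {n : ℕ} {q : ℝ} (hq0 : 0 ≤ q) (hq1 : q ≤ 1) (Φ : BV n → Bool) :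
    0 ≤ PFA q Φ := by
  refine Finset.sum_nonneg fun z _ => mul_nonneg (noiseP_nonneg hq0 hq1 z) ?_
  split <;> norm_num

lemma PMD_nonneg {n N Δ : ℕ} {q : ℝ} (hq0 : 0 ≤ q) (hq1 : q ≤ 1)
    (C : Code n N Δ) (Φ : BV n → Bool) : 0 ≤ PMD q C Φ := by
  refine mul_nonneg (by positivity) ?_
  refine Finset.sum_nonneg fun m _ => Finset.sum_nonneg fun k _ => ?_
  refine MD_nonneg hq0 hq1 _ _ fun z => ?_
  split <;> norm_num

lemma covertGap_le {n N Δ : ℕ} {q : ℝ} (hq0 : 0 ≤ q) (hq1 : q ≤ 1)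
    (C : Code n N Δ) (Φ : BV n → Bool) :
    covertGap q C ≤ PFA q Φ + PMD q C Φ := by
  refine ciInf_le ⟨0, ?_⟩ Φ
  rintro y ⟨Ψ, rfl⟩
  exact add_nonneg (PFA_nonneg hq0 hq1 Ψ) (PMD_nonneg hq0 hq1 C Ψ)

lemma errSilent_le_one {n N Δ : ℕ} {p q : ℝ} (hq0 : 0 ≤ q) (hq1 : q ≤ 1)
    (C : Code n N Δ) (J : Jammer n p) : errSilent q C J ≤ 1 := by
  classical
  rw [errSilent]
  have hinner : ∀ (k : BV Δ) (zb : BV n),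
      noiseP q zb * ∑ s : BV n, J.W zb s *
        (if C.dec s k = Option.none then (0:ℝ) else 1) ≤ noiseP q zb := by
    intro k zb
    have h1 : ∑ s : BV n, J.W zb s * (if C.dec s k = Option.none then (0:ℝ) else 1)
        ≤ ∑ s : BV n, J.W zb s := by
      refine Finset.sum_le_sum fun sv _ => ?_
      have := J.nonneg zb sv
      split <;> nlinarith
    rw [J.sum_one zb] at h1
    have h2 : 0 ≤ noiseP q zb := noiseP_nonneg hq0 hq1 zb
    nlinarith
  have h3 : ∀ k : BV Δ, (∑ zb : BV n, noiseP q zb * ∑ s : BV n, J.W zb s *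
      (if C.dec s k = Option.none then (0:ℝ) else 1)) ≤ 1 := by
    intro k
    calc ∑ zb : BV n, noiseP q zb * ∑ s : BV n, J.W zb s *
          (if C.dec s k = Option.none then (0:ℝ) else 1)
        ≤ ∑ zb : BV n, noiseP q zb := Finset.sum_le_sum fun zb _ => hinner k zb
      _ = 1 := sum_noiseP q
  have h4 : (∑ k : BV Δ, ∑ zb : BV n, noiseP q zb * ∑ s : BV n, J.W zb s *
      (if C.dec s k = Option.none then (0:ℝ) else 1)) ≤ (2:ℝ)^Δ := by
    calc (∑ k : BV Δ, ∑ zb : BV n, noiseP q zb * ∑ s : BV n, J.W zb s *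
          (if C.dec s k = Option.none then (0:ℝ) else 1))
        ≤ ∑ _k : BV Δ, (1:ℝ) := Finset.sum_le_sum fun k _ => h3 k
      _ = (2:ℝ)^Δ := by
          rw [Finset.sum_const, Finset.card_univ]
          simp [nsmul_eq_mul]
  have h5 : (0:ℝ) < 2^Δ := by positivity
  rw [div_mul_eq_mul_div, one_mul, div_le_one h5]
  exact h4

lemma errActive_le_one {n N Δ : ℕ} {p q : ℝ} (hq0 : 0 ≤ q) (hq1 : q ≤ 1)
    (C : Code n N Δ) (J : Jammer n p) : errActive q C J ≤ 1 := by
  classical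
  rw [errActive]
  have hinner : ∀ (m : Fin N) (k : BV Δ) (zb : BV n),
      noiseP q zb * ∑ s : BV n, J.W (vxor (C.enc m k) zb) s *
        (if C.dec (vxor (C.enc m k) s) k = some m then (0:ℝ) else 1) ≤ noiseP q zb := by
    intro m k zb
    have h1 : ∑ s : BV n, J.W (vxor (C.enc m k) zb) s *
        (if C.dec (vxor (C.enc m k) s) k = some m then (0:ℝ) else 1)
        ≤ ∑ s : BV n, J.W (vxor (C.enc m k) zb) s := by
      refine Finset.sum_le_sum fun sv _ => ?_
      have := J.nonneg (vxor (C.enc m k) zb) sv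
      split <;> nlinarith
    rw [J.sum_one] at h1
    have h2 : 0 ≤ noiseP q zb := noiseP_nonneg hq0 hq1 zb
    nlinarith
  have h3 : (∑ m : Fin N, ∑ k : BV Δ, ∑ zb : BV n,
      noiseP q zb * ∑ s : BV n, J.W (vxor (C.enc m k) zb) s *
        (if C.dec (vxor (C.enc m k) s) k = some m then (0:ℝ) else 1))
      ≤ (N:ℝ) * 2^Δ := by
    calc (∑ m : Fin N, ∑ k : BV Δ, ∑ zb : BV n,
        noiseP q zb * ∑ s : BV n, J.W (vxor (C.enc m k) zb) s *
          (if C.dec (vxor (C.enc m k) s) k = some m then (0:ℝ) else 1))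
        ≤ ∑ _m : Fin N, ∑ _k : BV Δ, (1:ℝ) := by
          refine Finset.sum_le_sum fun m _ => Finset.sum_le_sum fun k _ => ?_
          calc ∑ zb : BV n, noiseP q zb * ∑ s : BV n, J.W (vxor (C.enc m k) zb) s *
                (if C.dec (vxor (C.enc m k) s) k = some m then (0:ℝ) else 1)
              ≤ ∑ zb : BV n, noiseP q zb := Finset.sum_le_sum fun zb _ => hinner m k zb
            _ = 1 := sum_noiseP q
      _ = (N:ℝ) * 2^Δ := by
          simp [Finset.sum_const, Finset.card_univ, nsmul_eq_mul]
  rcases Nat.eq_zero_or_pos N with hN | hN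
  · subst hN
    simp
  · have h5 : (0:ℝ) < (N:ℝ) * 2^Δ := by
      have : (0:ℝ) < (N:ℝ) := by exact_mod_cast hN
      positivity
    rw [div_mul_eq_mul_div, one_mul, div_le_one h5]
    exact h3

lemma Perr_ge {n N Δ : ℕ} {p q : ℝ} (hq0 : 0 ≤ q) (hq1 : q ≤ 1)
    (C : Code n N Δ) (J : Jammer n p) :
    errSilent q C J + errActive q C J ≤ Perr p q C := by
  refine le_ciSup_of_le ⟨2, ?_⟩ J le_rfl
  rintro y ⟨J', rfl⟩
  have := add_le_add (errSilent_le_one (p := p) hq0 hq1 C J')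
    (errActive_le_one (p := p) hq0 hq1 C J')
  norm_num at this
  exact this

lemma errSilent_delta {n N Δ : ℕ} {p q : ℝ} (C : Code n N Δ) (J : Jammer n p)
    (F : BV n → BV n) (hJ : ∀ z sv, J.W z sv = if sv = F z then 1 else 0) :
    errSilent q C J = (1/(2:ℝ)^Δ) * ∑ k : BV Δ, ∑ zb : BV n, noiseP q zb *
      (if C.dec (F zb) k = Option.none then (0:ℝ) else 1) := by
  classical
  rw [errSilent]
  congr 1
  refine Finset.sum_congr rfl fun k _ => Finset.sum_congr rfl fun zb _ => ?_
  congr 1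
  rw [Finset.sum_congr rfl (fun sv _ => by rw [hJ zb sv])]
  rw [Finset.sum_congr rfl (fun sv _ => ite_mul _ (1:ℝ) 0 _)]
  simp

lemma errActive_delta {n N Δ : ℕ} {p q : ℝ} (C : Code n N Δ) (J : Jammer n p)
    (F : BV n → BV n) (hJ : ∀ z sv, J.W z sv = if sv = F z then 1 else 0) :
    errActive q C J = (1/((N:ℝ)*2^Δ)) * ∑ m : Fin N, ∑ k : BV Δ, ∑ zb : BV n,
      noiseP q zb *
        (if C.dec (vxor (C.enc m k) (F (vxor (C.enc m k) zb))) k = some m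
          then (0:ℝ) else 1) := by
  classical
  rw [errActive]
  congr 1
  refine Finset.sum_congr rfl fun m _ => Finset.sum_congr rfl fun k _ =>
    Finset.sum_congr rfl fun zb _ => ?_
  congr 1
  rw [Finset.sum_congr rfl (fun sv _ => by rw [hJ (vxor (C.enc m k) zb) sv])]
  rw [Finset.sum_congr rfl (fun sv _ => ite_mul _ (1:ℝ) 0 _)]
  simp

set_option maxHeartbeats 1000000 in
lemma attack_bound {n N Δ : ℕ} {p q b τ : ℝ} (hq0 : 0 ≤ q) (hq1 : q ≤ 1)
    (hp0 : 0 ≤ p) (hN : 1 ≤ N) (C : Code n N Δ)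
    (hb : 0 ≤ b * Real.sqrt n) (hτ : τ = p * (n:ℝ) - b * Real.sqrt n) :
    ∃ J : Jammer n p,
      (∑ z : BV n, noiseP q z * (if ((wt z : ℕ):ℝ) ≤ τ then (1:ℝ) else 0)) *
        ((∑ k : BV Δ, ∑ m : Fin N,
            (if ((wt (C.enc m k) : ℕ):ℝ) ≤ b * Real.sqrt n then (1:ℝ) else 0))
          / ((N:ℝ) * 2^Δ))
      ≤ errSilent q C J + errActive q C J := by
  classical
  have hp_n : (0:ℝ) ≤ p * n := by positivity
  set F : BV n → BV n :=
    fun z => if ((wt z : ℕ):ℝ) ≤ p * (n:ℝ) then z else (fun _ => false) with hF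
  have hFeq : ∀ z : BV n,
      F z = if ((wt z : ℕ):ℝ) ≤ p * (n:ℝ) then z else (fun _ => false) :=
    fun _ => rfl
  have hFwt : ∀ z, ((wt (F z) : ℕ):ℝ) ≤ p * n := by
    intro z
    rw [hFeq z]
    by_cases h : ((wt z : ℕ):ℝ) ≤ p * (n:ℝ)
    · rw [if_pos h]; exact h
    · rw [if_neg h, wt_false]; exact_mod_cast hp_n
  have hFid : ∀ z : BV n, ((wt z : ℕ):ℝ) ≤ p * n → F z = z := by
    intro z h; rw [hFeq z, if_pos h]
  set J : Jammer n p :=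
    { W := fun z sv => if sv = F z then 1 else 0
      nonneg := by intro z sv; split <;> norm_num
      sum_one := by intro z; simp
      wt_le := by
        intro z sv hW
        by_cases h : sv = F z
        · rw [h]; exact hFwt z
        · simp [h] at hW } with hJdef
  have hJW : ∀ z sv, J.W z sv = if sv = F z then 1 else 0 := fun z sv => rfl
  refine ⟨J, ?_⟩
  -- notation
  set ps : BV n → ℝ := fun zb => if ((wt zb : ℕ):ℝ) ≤ τ then (1:ℝ) else 0 with hps
  set lt : Fin N → BV Δ → ℝ :=
    fun m k => if ((wt (C.enc m k) : ℕ):ℝ) ≤ b * Real.sqrt n then (1:ℝ) else 0 with hlt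
  set dS : BV Δ → BV n → ℝ :=
    fun k zb => if C.dec zb k = Option.none then (0:ℝ) else 1 with hdS
  set dA : Fin N → BV Δ → BV n → ℝ :=
    fun m k zb => if C.dec zb k = some m then (0:ℝ) else 1 with hdA
  have hpsE : ∀ zb, ps zb = if ((wt zb : ℕ):ℝ) ≤ τ then (1:ℝ) else 0 := fun _ => rfl
  have hltE : ∀ m k, lt m k =
      if ((wt (C.enc m k) : ℕ):ℝ) ≤ b * Real.sqrt n then (1:ℝ) else 0 := fun _ _ => rfl
  have hdSE : ∀ k zb, dS k zb =
      if C.dec zb k = Option.none then (0:ℝ) else 1 := fun _ _ => rfl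
  have hdAE : ∀ m k zb, dA m k zb =
      if C.dec zb k = some m then (0:ℝ) else 1 := fun _ _ _ => rfl
  have hps01 : ∀ zb, 0 ≤ ps zb ∧ ps zb ≤ 1 := by
    intro zb; rw [hpsE]; split <;> norm_num
  have hlt01 : ∀ m k, 0 ≤ lt m k ∧ lt m k ≤ 1 := by
    intro m k; rw [hltE]; split <;> norm_num
  have hdS01 : ∀ k zb, 0 ≤ dS k zb ∧ dS k zb ≤ 1 := by
    intro k zb; rw [hdSE]; split <;> norm_num
  have hdA01 : ∀ m k zb, 0 ≤ dA m k zb ∧ dA m k zb ≤ 1 := by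
    intro m k zb; rw [hdAE]; split <;> norm_num
  have hnoise : ∀ zb : BV n, 0 ≤ noiseP q zb := noiseP_nonneg hq0 hq1
  have hτp : τ ≤ p * n := by rw [hτ]; linarith
  -- silent error bound
  have hS : (1/(2:ℝ)^Δ) * (∑ k : BV Δ, ∑ zb : BV n,
      noiseP q zb * (ps zb * dS k zb)) ≤ errSilent q C J := by
    rw [errSilent_delta C J F hJW]
    refine mul_le_mul_of_nonneg_left ?_ (by positivity)
    refine Finset.sum_le_sum fun k _ => Finset.sum_le_sum fun zb _ => ?_
    refine mul_le_mul_of_nonneg_left ?_ (hnoise zb)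
    by_cases h : ((wt zb : ℕ):ℝ) ≤ τ
    · rw [hFid zb (le_trans h hτp), hpsE zb, if_pos h, one_mul, hdSE k zb]
    · rw [hpsE zb, if_neg h, zero_mul]
      split <;> norm_num
  -- active error bound
  have hA : (1/((N:ℝ)*2^Δ)) * (∑ m : Fin N, ∑ k : BV Δ, ∑ zb : BV n,
      noiseP q zb * (ps zb * (lt m k * dA m k zb))) ≤ errActive q C J := by
    rw [errActive_delta C J F hJW]
    refine mul_le_mul_of_nonneg_left ?_ (by positivity)
    refine Finset.sum_le_sum fun m _ => Finset.sum_le_sum fun k _ =>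
      Finset.sum_le_sum fun zb _ => ?_
    refine mul_le_mul_of_nonneg_left ?_ (hnoise zb)
    by_cases h1 : ((wt zb : ℕ):ℝ) ≤ τ
    · by_cases h2 : ((wt (C.enc m k) : ℕ):ℝ) ≤ b * Real.sqrt n
      · have hwx : ((wt (vxor (C.enc m k) zb) : ℕ):ℝ) ≤ p * n := by
          have hle := wt_vxor_le (C.enc m k) zb
          have : ((wt (vxor (C.enc m k) zb) : ℕ):ℝ)
              ≤ ((wt (C.enc m k) : ℕ):ℝ) + ((wt zb : ℕ):ℝ) := by
            exact_mod_cast hle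
          rw [hτ] at h1
          linarith
        rw [hFid _ hwx, vxor_vxor, hpsE zb, hltE m k, if_pos h1, if_pos h2,
          one_mul, one_mul, hdAE m k zb]
      · rw [hltE m k, if_neg h2, zero_mul, mul_zero]
        split <;> norm_num
    · rw [hpsE zb, if_neg h1, zero_mul]
      split <;> norm_num
  -- the inner comparison
  have hNpos : (0:ℝ) < (N:ℝ) := by exact_mod_cast hN
  have hG : ∀ (k : BV Δ) (zb : BV n),
      (1/(N:ℝ)) * (∑ m : Fin N, lt m k)
        ≤ dS k zb + (1/(N:ℝ)) * (∑ m : Fin N, lt m k * dA m k zb) := by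
    intro k zb
    rcases hdec : C.dec zb k with _ | mhat
    · have h1 : ∀ m : Fin N, dA m k zb = 1 := by
        intro m; rw [hdAE m k zb, hdec]; simp
      have h2 : dS k zb = 0 := by rw [hdSE k zb, hdec]; simp
      rw [h2, zero_add]
      refine mul_le_mul_of_nonneg_left ?_ (by positivity)
      refine Finset.sum_le_sum fun m _ => ?_
      rw [h1 m, mul_one]
    · have h2 : dS k zb = 1 := by rw [hdSE k zb, hdec]; simp
      rw [h2]
      have h3 : (1/(N:ℝ)) * (∑ m : Fin N, lt m k) ≤ 1 := by
        rw [mul_comm, ← div_eq_mul_one_div, div_le_one hNpos]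
        calc ∑ m : Fin N, lt m k ≤ ∑ _m : Fin N, (1:ℝ) :=
              Finset.sum_le_sum fun m _ => (hlt01 m k).2
          _ = (N:ℝ) := by simp
      have h4 : 0 ≤ (1/(N:ℝ)) * (∑ m : Fin N, lt m k * dA m k zb) := by
        refine mul_nonneg (by positivity) (Finset.sum_nonneg fun m _ =>
          mul_nonneg (hlt01 m k).1 (hdA01 m k zb).1)
      linarith
  -- reorder the active sum
  have hreorder : (∑ m : Fin N, ∑ k : BV Δ, ∑ zb : BV n,
      noiseP q zb * (ps zb * (lt m k * dA m k zb)))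
      = ∑ k : BV Δ, ∑ zb : BV n,
          noiseP q zb * (ps zb * (∑ m : Fin N, lt m k * dA m k zb)) := by
    rw [Finset.sum_comm]
    refine Finset.sum_congr rfl fun k _ => ?_
    rw [Finset.sum_comm]
    refine Finset.sum_congr rfl fun zb _ => ?_
    rw [Finset.mul_sum, Finset.mul_sum]
  -- put it together
  set Psucc : ℝ := ∑ z : BV n, noiseP q z * ps z with hPsucc
  have hcomb : Psucc * ((∑ k : BV Δ, ∑ m : Fin N, lt m k) / ((N:ℝ) * 2^Δ))
      ≤ (1/(2:ℝ)^Δ) * (∑ k : BV Δ, ∑ zb : BV n, noiseP q zb * (ps zb * dS k zb))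
        + (1/((N:ℝ)*2^Δ)) * (∑ m : Fin N, ∑ k : BV Δ, ∑ zb : BV n,
            noiseP q zb * (ps zb * (lt m k * dA m k zb))) := by
    rw [hreorder]
    set SSsum : ℝ := ∑ k : BV Δ, ∑ zb : BV n, noiseP q zb * (ps zb * dS k zb) with hSSs
    set AAkz : ℝ := ∑ k : BV Δ, ∑ zb : BV n,
      noiseP q zb * (ps zb * (∑ m : Fin N, lt m k * dA m k zb)) with hAAs
    set Lk : ℝ := ∑ k : BV Δ, ∑ m : Fin N, lt m k with hLks
    have hTle : ∀ (k : BV Δ) (zb : BV n),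
        noiseP q zb * (ps zb * ((1/(N:ℝ)) * ∑ m : Fin N, lt m k))
          ≤ noiseP q zb * (ps zb * dS k zb)
            + (1/(N:ℝ)) * (noiseP q zb * (ps zb * (∑ m : Fin N, lt m k * dA m k zb))) := by
      intro k zb
      have h0 : 0 ≤ noiseP q zb * ps zb := mul_nonneg (hnoise zb) (hps01 zb).1
      have h := mul_le_mul_of_nonneg_left (hG k zb) h0
      calc noiseP q zb * (ps zb * ((1/(N:ℝ)) * ∑ m : Fin N, lt m k))
          = (noiseP q zb * ps zb) * ((1/(N:ℝ)) * ∑ m : Fin N, lt m k) := by ring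
        _ ≤ (noiseP q zb * ps zb) * (dS k zb
              + (1/(N:ℝ)) * (∑ m : Fin N, lt m k * dA m k zb)) := h
        _ = noiseP q zb * (ps zb * dS k zb)
            + (1/(N:ℝ)) * (noiseP q zb * (ps zb * (∑ m : Fin N, lt m k * dA m k zb))) := by
            ring
    have hsum : (∑ k : BV Δ, ∑ zb : BV n,
        noiseP q zb * (ps zb * ((1/(N:ℝ)) * ∑ m : Fin N, lt m k)))
        ≤ SSsum + (1/(N:ℝ)) * AAkz := by
      calc (∑ k : BV Δ, ∑ zb : BV n,
          noiseP q zb * (ps zb * ((1/(N:ℝ)) * ∑ m : Fin N, lt m k)))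
          ≤ ∑ k : BV Δ, ∑ zb : BV n,
              (noiseP q zb * (ps zb * dS k zb)
                + (1/(N:ℝ)) * (noiseP q zb * (ps zb * (∑ m : Fin N, lt m k * dA m k zb)))) :=
            Finset.sum_le_sum fun k _ => Finset.sum_le_sum fun zb _ => hTle k zb
        _ = SSsum + (1/(N:ℝ)) * AAkz := by
            rw [hSSs, hAAs]
            simp only [Finset.sum_add_distrib, ← Finset.mul_sum]
    have hTeq : (∑ k : BV Δ, ∑ zb : BV n,
        noiseP q zb * (ps zb * ((1/(N:ℝ)) * ∑ m : Fin N, lt m k)))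
        = Psucc * ((1/(N:ℝ)) * Lk) := by
      have hinner : ∀ k : BV Δ,
          (∑ zb : BV n, noiseP q zb * (ps zb * ((1/(N:ℝ)) * ∑ m : Fin N, lt m k)))
          = ((1/(N:ℝ)) * ∑ m : Fin N, lt m k) * Psucc := by
        intro k
        have he : ((1/(N:ℝ)) * ∑ m : Fin N, lt m k) * Psucc
            = ∑ zb : BV n, ((1/(N:ℝ)) * ∑ m : Fin N, lt m k) * (noiseP q zb * ps zb) := by
          rw [hPsucc, Finset.mul_sum]
        rw [he]
        exact Finset.sum_congr rfl fun zb _ => by ring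
      rw [Finset.sum_congr rfl (fun k _ => hinner k), ← Finset.sum_mul, hLks]
      have he2 : ((1:ℝ)/(N:ℝ)) * (∑ k : BV Δ, ∑ m : Fin N, lt m k)
          = ∑ k : BV Δ, (1/(N:ℝ)) * ∑ m : Fin N, lt m k := Finset.mul_sum _ _ _
      rw [he2, mul_comm]
    have h6 : Psucc * ((1/(N:ℝ)) * Lk) ≤ SSsum + (1/(N:ℝ)) * AAkz := by
      rw [← hTeq]; exact hsum
    have h7 := mul_le_mul_of_nonneg_left h6
      (by positivity : (0:ℝ) ≤ 1/(2:ℝ)^Δ)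
    calc Psucc * (Lk / ((N:ℝ)*2^Δ))
        = (1/(2:ℝ)^Δ) * (Psucc * ((1/(N:ℝ)) * Lk)) := by ring
      _ ≤ (1/(2:ℝ)^Δ) * (SSsum + (1/(N:ℝ)) * AAkz) := h7
      _ = (1/(2:ℝ)^Δ)*SSsum + (1/((N:ℝ)*2^Δ))*AAkz := by ring
  calc Psucc * ((∑ k : BV Δ, ∑ m : Fin N, lt m k) / ((N:ℝ) * 2^Δ))
      ≤ (1/(2:ℝ)^Δ) * (∑ k : BV Δ, ∑ zb : BV n, noiseP q zb * (ps zb * dS k zb))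
        + (1/((N:ℝ)*2^Δ)) * (∑ m : Fin N, ∑ k : BV Δ, ∑ zb : BV n,
            noiseP q zb * (ps zb * (lt m k * dA m k zb))) := hcomb
    _ ≤ errSilent q C J + errActive q C J := add_le_add hS hA

set_option maxHeartbeats 2000000 in
/-- Theorem 2, part 1.  If `0 < q ≤ p < 1/2` and
`εd ∈ (0,1)`, then for every sequence of key sizes `Δ(n)` no positive relative
throughput is achievable; i.e. the covert capacity is `0`. -/
theorem no_positive_throughput (p q εd : ℝ)
    (hq0 : 0 < q) (hqp : q ≤ p) (hp2 : p < 1 / 2)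
    (he0 : 0 < εd) (he1 : εd < 1) :
    ∀ (Δ : ℕ → ℕ) (r : ℝ), 0 < r → ¬ Achievable p q εd Δ r := by
  classical
  intro Δ r hr
  rintro ⟨N, C, hcov, hrate, htend⟩
  have hq2 : q < 1/2 := lt_of_le_of_lt hqp hp2
  have hq1 : q < 1 := by linarith
  have h2q : (0:ℝ) < 1 - 2*q := by linarith
  have hqq : (0:ℝ) < q*(1-q) := by nlinarith
  have hp0 : (0:ℝ) ≤ p := le_trans hq0.le hqp
  set η : ℝ := (1 - εd)/4 with hηdef
  have hη0 : 0 < η := by rw [hηdef]; linarith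
  have hη1 : η < 1 := by rw [hηdef]; linarith
  set a : ℝ := Real.sqrt (4*(q*(1-q))/η) with hadef
  have ha0 : 0 < a := Real.sqrt_pos.2 (by positivity)
  have ha2 : a^2 = 4*(q*(1-q))/η := Real.sq_sqrt (by positivity)
  set b : ℝ := 2*a/(1-2*q) with hbdef
  have hb0 : 0 < b := by rw [hbdef]; positivity
  have hbq : (1-2*q)*b = 2*a := by
    rw [hbdef]; field_simp
  set γ : ℝ := (13/16)*(1-εd) with hγdef
  have hγ0 : 0 < γ := by rw [hγdef]; linarith
  obtain ⟨δ, hδ0, n0, hanti⟩ := anticonc hq0 hq2 b hb0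
  have hδγ : 0 < δ*γ := mul_pos hδ0 hγ0
  -- eventual facts
  have hev1 : ∀ᶠ n in Filter.atTop, 1 - εd - η/4 ≤ covertGap q (C n) := by
    have hlim : 1 - εd ≤ Filter.liminf (fun n => covertGap q (C n)) Filter.atTop := hcov
    rw [Filter.liminf_eq] at hlim
    set S : Set ℝ := {x | ∀ᶠ n in Filter.atTop, x ≤ covertGap q (C n)} with hSdef
    have hSne : S.Nonempty := by
      by_contra hSe
      rw [Set.not_nonempty_iff_eq_empty] at hSe
      rw [hSe, Real.sSup_empty] at hlim
      linarith
    obtain ⟨x, hxS, hx⟩ := exists_lt_of_lt_csSup hSne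
      (show 1 - εd - η/4 < sSup S by linarith)
    exact hxS.mono fun n h => le_trans hx.le h
  have hev2 : ∀ᶠ n in Filter.atTop, Perr p q (C n) < δ*γ :=
    htend.eventually_lt_const hδγ
  obtain ⟨n, ⟨⟨hgap, hperr⟩, hn0⟩, hn1⟩ :=
    (((hev1.and hev2).and (Filter.eventually_ge_atTop n0)).and
      (Filter.eventually_ge_atTop 1)).exists
  -- basic facts about this n
  have hnR : (0:ℝ) < (n:ℝ) := by exact_mod_cast Nat.lt_of_lt_of_le Nat.zero_lt_one hn1
  have hs0 : 0 < Real.sqrt n := Real.sqrt_pos.2 hnR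
  have hNn : 1 ≤ N n := by
    by_contra hcon
    have hN0 : N n = 0 := by omega
    have h := hrate n hn1
    rw [hN0] at h
    simp only [Nat.cast_zero, Real.logb, Real.log_zero, zero_div] at h
    linarith
  have hNR : (1:ℝ) ≤ (N n : ℝ) := by exact_mod_cast hNn
  have hD0 : (0:ℝ) < (N n : ℝ) * 2^(Δ n) := by
    have h2 : (0:ℝ) < (2:ℝ)^(Δ n) := by positivity
    nlinarith
  -- threshold detector facts
  have heq : (n:ℝ)*(q*(1-q))/(a*Real.sqrt n)^2 = η/4 := by
    have hsq : (a*Real.sqrt n)^2 = a^2 * (n:ℝ) := by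
      rw [mul_pow, Real.sq_sqrt (Nat.cast_nonneg n)]
    rw [hsq, ha2]
    rw [div_eq_div_iff (by positivity) (by norm_num)]
    field_simp
  have has0 : 0 < a * Real.sqrt n := by positivity
  have hPFA : PFA q (fun z : BV n =>
      decide (q*(n:ℝ) + a*Real.sqrt n ≤ ((wt z : ℕ):ℝ))) ≤ η/4 := by
    have h := PFA_thresh (n := n) (q := q) (a := a) hq0.le hq1.le has0
    rw [heq] at h
    exact h
  -- PMD bound
  have hMD : ∀ (m : Fin (N n)) (k : BV (Δ n)),
      (∑ z : BV n, noiseP q (vxor z ((C n).enc m k)) *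
        (if (fun z : BV n => decide (q*(n:ℝ) + a*Real.sqrt n ≤ ((wt z : ℕ):ℝ))) z
          then (0:ℝ) else 1))
      ≤ η/4 + (1 - η/4) * (if ((wt ((C n).enc m k) : ℕ):ℝ) ≤ b * Real.sqrt n
          then (1:ℝ) else 0) := by
    intro m k
    by_cases hl : ((wt ((C n).enc m k) : ℕ):ℝ) ≤ b * Real.sqrt n
    · rw [if_pos hl]
      have h1 := MD_le_one (n := n) hq0.le hq1.le ((C n).enc m k)
        (fun z => if (fun z : BV n =>
          decide (q*(n:ℝ) + a*Real.sqrt n ≤ ((wt z : ℕ):ℝ))) z then (0:ℝ) else 1)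
        (fun z => by dsimp only; split <;> norm_num)
      calc _ ≤ (1:ℝ) := h1
        _ = η/4 + (1 - η/4) * 1 := by ring
    · rw [if_neg hl, mul_zero, add_zero]
      have hheavy : 2*(a*Real.sqrt n) ≤ (1 - 2*q) * ((wt ((C n).enc m k) : ℕ):ℝ) := by
        rw [not_le] at hl
        have h3 := mul_lt_mul_of_pos_left hl h2q
        have h4 : (1-2*q)*(b*Real.sqrt n) = 2*(a*Real.sqrt n) := by
          rw [← mul_assoc, hbq]; ring
        rw [h4] at h3
        exact h3.le
      have h := MD_thresh (n := n) hq0.le hq1.le ((C n).enc m k) has0 hheavy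
      rw [heq] at h
      exact h
  have hPMD : PMD q (C n) (fun z : BV n =>
      decide (q*(n:ℝ) + a*Real.sqrt n ≤ ((wt z : ℕ):ℝ)))
      ≤ (1/((N n : ℝ) * 2^(Δ n))) * ((η/4) * ((N n : ℝ) * 2^(Δ n))
          + (1 - η/4) * (∑ m : Fin (N n), ∑ k : BV (Δ n),
              (if ((wt ((C n).enc m k) : ℕ):ℝ) ≤ b * Real.sqrt n then (1:ℝ) else 0))) := by
    rw [PMD]
    refine mul_le_mul_of_nonneg_left ?_ (by positivity)
    calc (∑ m : Fin (N n), ∑ k : BV (Δ n), ∑ z : BV n,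
          noiseP q (vxor z ((C n).enc m k)) *
            (if (fun z : BV n =>
              decide (q*(n:ℝ) + a*Real.sqrt n ≤ ((wt z : ℕ):ℝ))) z then (0:ℝ) else 1))
        ≤ ∑ m : Fin (N n), ∑ k : BV (Δ n),
            (η/4 + (1 - η/4) * (if ((wt ((C n).enc m k) : ℕ):ℝ) ≤ b * Real.sqrt n
              then (1:ℝ) else 0)) :=
          Finset.sum_le_sum fun m _ => Finset.sum_le_sum fun k _ => hMD m k
      _ = (η/4) * ((N n : ℝ) * 2^(Δ n))
          + (1 - η/4) * (∑ m : Fin (N n), ∑ k : BV (Δ n),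
              (if ((wt ((C n).enc m k) : ℕ):ℝ) ≤ b * Real.sqrt n then (1:ℝ) else 0)) := by
          simp only [Finset.sum_add_distrib, Finset.sum_const, Finset.card_univ,
            nsmul_eq_mul, ← Finset.mul_sum]
          simp [Fintype.card_fun]
          ring
  -- covertness forces many light codewords
  have hgap2 : covertGap q (C n) ≤ PFA q (fun z : BV n =>
        decide (q*(n:ℝ) + a*Real.sqrt n ≤ ((wt z : ℕ):ℝ)))
      + PMD q (C n) (fun z : BV n =>
        decide (q*(n:ℝ) + a*Real.sqrt n ≤ ((wt z : ℕ):ℝ))) :=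
    covertGap_le hq0.le hq1.le (C n) _
  have hlightratio : γ ≤ (∑ m : Fin (N n), ∑ k : BV (Δ n),
      (if ((wt ((C n).enc m k) : ℕ):ℝ) ≤ b * Real.sqrt n then (1:ℝ) else 0))
        / ((N n : ℝ) * 2^(Δ n)) := by
    set L : ℝ := ∑ m : Fin (N n), ∑ k : BV (Δ n),
      (if ((wt ((C n).enc m k) : ℕ):ℝ) ≤ b * Real.sqrt n then (1:ℝ) else 0) with hLdef
    have hL0 : 0 ≤ L := by
      rw [hLdef]
      refine Finset.sum_nonneg fun m _ => Finset.sum_nonneg fun k _ => ?_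
      split <;> norm_num
    have hexp : (1/((N n : ℝ) * 2^(Δ n))) * ((η/4) * ((N n : ℝ) * 2^(Δ n))
        + (1 - η/4) * L) = η/4 + (1 - η/4) * (L / ((N n : ℝ) * 2^(Δ n))) := by
      field_simp
    have hchain : 1 - εd - η/4 ≤ η/4 + (η/4 + (1 - η/4) * (L / ((N n : ℝ) * 2^(Δ n)))) := by
      have := le_trans hgap (le_trans hgap2 (add_le_add hPFA (le_trans hPMD (le_of_eq hexp))))
      linarith [this]
    have hLD0 : 0 ≤ L / ((N n : ℝ) * 2^(Δ n)) := div_nonneg hL0 hD0.le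
    have hshrink : (1 - η/4) * (L / ((N n : ℝ) * 2^(Δ n))) ≤ L / ((N n : ℝ) * 2^(Δ n)) := by
      nlinarith [mul_nonneg (by linarith : (0:ℝ) ≤ η/4) hLD0]
    have hγeq : γ = 1 - εd - 3*(η/4) := by
      rw [hγdef, hηdef]; ring
    linarith
  -- the attack
  obtain ⟨J, hJ⟩ := attack_bound (n := n) (N := N n) (Δ := Δ n)
    (τ := p*(n:ℝ) - b*Real.sqrt n) hq0.le hq1.le hp0 hNn (C n)
    (by positivity) rfl
  have hPsuccδ : δ ≤ ∑ z : BV n, noiseP q z *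
      (if ((wt z : ℕ):ℝ) ≤ p*(n:ℝ) - b*Real.sqrt n then (1:ℝ) else 0) := by
    refine hanti n hn0 _ ?_
    have : q*(n:ℝ) ≤ p*(n:ℝ) := mul_le_mul_of_nonneg_right hqp hnR.le
    linarith
  have hPsucc0 : (0:ℝ) ≤ ∑ z : BV n, noiseP q z *
      (if ((wt z : ℕ):ℝ) ≤ p*(n:ℝ) - b*Real.sqrt n then (1:ℝ) else 0) :=
    le_trans hδ0.le hPsuccδ
  have hswap : (∑ k : BV (Δ n), ∑ m : Fin (N n),
      (if ((wt ((C n).enc m k) : ℕ):ℝ) ≤ b * Real.sqrt n then (1:ℝ) else 0))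
      = ∑ m : Fin (N n), ∑ k : BV (Δ n),
          (if ((wt ((C n).enc m k) : ℕ):ℝ) ≤ b * Real.sqrt n then (1:ℝ) else 0) :=
    Finset.sum_comm
  have hfinal : δ * γ ≤ Perr p q (C n) := by
    refine le_trans ?_ (le_trans hJ (Perr_ge hq0.le hq1.le (C n) J))
    rw [hswap]
    exact mul_le_mul hPsuccδ hlightratio hγ0.le hPsucc0
  linarith

end CovertComm
end

section
/- If the message M is uniformly distributed on F^l and the key K = (K₁,K₂) is uniformly distributed on F × F, independently of M, then the pair (M, G_K(M)) is uniformly distributed on F^l × F; that is, for every (i,j) ∈ F^l × F, P(M = i and G_K(M) = j) = 1/(|F|^l · |F|). -/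
/-!
Polynomial hashing over a finite field `F`.
For a key pair `k = (k₁, k₂) ∈ F × F` and a message `m = (m₁,…,m_l) ∈ F^l`,
the polynomial hash is `G_k(m) = k₂ + ∑_{u=1}^{l} k₁^u · m_u`.
-/

namespace PolyHash

open Finset

/-- The polynomial hash `G_k(m) = k₂ + ∑_{u=1}^{l} k₁^u · m_u`. -/
def Ghash {F : Type*} [Field F] {l : ℕ} (k : F × F) (m : Fin l → F) : F :=
  k.2 + ∑ u : Fin l, k.1 ^ (u.val + 1) * m u

end PolyHash

namespace PolyHash

/-- If the message `M` is uniform on `F^l` and the key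
`K = (K₁,K₂)` is uniform on `F × F`, independently of `M` (so the pair
`(M, K)` is uniform on `F^l × (F × F)`), then `(M, G_K(M))` is uniform on
`F^l × F`: for every `(i, j)`,
`P(M = i ∧ G_K(M) = j) = 1 / (|F|^l · |F|)`. -/
theorem hash_output_uniform (F : Type*) [Field F] [Fintype F] [DecidableEq F]
    (l : ℕ) (hl : 1 ≤ l) (i : Fin l → F) (j : F) :
    ((Finset.univ.filter fun mk : (Fin l → F) × (F × F) =>
        mk.1 = i ∧ Ghash mk.2 mk.1 = j).card : ℝ)
      / (Fintype.card ((Fin l → F) × (F × F)) : ℝ)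
    = 1 / ((Fintype.card F : ℝ) ^ l * (Fintype.card F : ℝ)) := by
  have hcard : (Finset.univ.filter fun mk : (Fin l → F) × (F × F) =>
      mk.1 = i ∧ Ghash mk.2 mk.1 = j).card = Fintype.card F := by
    rw [← Finset.card_univ (α := F)]
    apply Finset.card_bij' (fun mk _ => mk.2.1)
      (fun k1 _ => (i, (k1, j - ∑ u : Fin l, k1 ^ (u.val + 1) * i u)))
    · intro a ha; simp
    · intro k1 _
      exact Finset.mem_filter.mpr ⟨Finset.mem_univ _, rfl, by simp only [Ghash]; exact sub_add_cancel _ _⟩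
    · intro a ha
      simp only [Finset.mem_filter, Finset.mem_univ, true_and] at ha
      obtain ⟨h1, h2⟩ := ha
      subst h1
      simp only [Ghash] at h2
      ext <;> simp [← h2]
    · intro k1 _; rfl
  have hF : (0 : ℝ) < (Fintype.card F : ℝ) := by
    exact_mod_cast Fintype.card_pos
  rw [hcard]
  rw [Fintype.card_prod, Fintype.card_prod, Fintype.card_fun]
  push_cast
  rw [Fintype.card_fin]
  field_simp

end PolyHash
end

section
/- Disambiguation by hashing (core of Lemma 3): fix (i,j) ∈ F^l × F, and let V be a finite set of pairs in F^l × F none of which equals (i,j). If K₁ is uniformly distributed on F, then the probability that there exists (i',j') ∈ V consistent with (i,j) under K₁ (i.e., j' − j = Σ_{u=1}^{l} K₁^u·(i'_u − i_u)) is at most |V| · l / |F|. -/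
namespace PolyHash

open scoped Classical
open Polynomial

open Finset Polynomial
open scoped Classical

lemma per_pair_bound (F : Type*) [Field F] [Fintype F] [DecidableEq F]
    (l : ℕ) (i : Fin l → F) (j : F) (x : (Fin l → F) × F) (hx : x ≠ (i, j)) :
    (Finset.univ.filter fun k1 : F =>
        x.2 - j = ∑ u : Fin l, k1 ^ (u.val + 1) * (x.1 u - i u)).card ≤ l := by
  set p : F[X] := (∑ u : Fin l, C (x.1 u - i u) * X ^ (u.val + 1)) - C (x.2 - j) with hp
  have heval : ∀ k1 : F, p.eval k1 =
      (∑ u : Fin l, k1 ^ (u.val + 1) * (x.1 u - i u)) - (x.2 - j) := by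
    intro k1
    simp [hp, eval_finset_sum, mul_comm]
  have hpne : p ≠ 0 := by
    by_cases h1 : x.1 = i
    · have h2 : x.2 ≠ j := fun h2 => hx (Prod.ext h1 h2)
      have hpe : p = -C (x.2 - j) := by simp [hp, h1]
      rw [hpe]
      simp [sub_eq_zero, h2]
      exact fun h => h2 h.symm
    · obtain ⟨u, hu⟩ : ∃ u, x.1 u ≠ i u := by
        by_contra h; push_neg at h; exact h1 (funext h)
      intro h0
      have hc : p.coeff (u.val + 1) = x.1 u - i u := by
        rw [hp, coeff_sub, finset_sum_coeff]
        have key : ∀ v : Fin l, (C (x.1 v - i v) * X ^ (v.val + 1)).coeff (u.val + 1)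
            = if v = u then x.1 u - i u else 0 := by
          intro v
          rw [coeff_C_mul, coeff_X_pow]
          by_cases hv : v = u
          · simp [hv]
          · have hne : ¬ (u.val + 1 = v.val + 1) := fun h =>
              hv (Fin.val_injective (Nat.succ_injective h.symm))
            simp [hne, hv]
            exact fun h => absurd (Fin.ext h).symm hv
        rw [Finset.sum_congr rfl fun v _ => key v, Finset.sum_ite_eq' Finset.univ u]
        simp [coeff_C]
      rw [h0] at hc
      simp only [coeff_zero] at hc
      exact hu (sub_eq_zero.mp hc.symm)
  have hdeg : p.natDegree ≤ l := by
    rw [hp]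
    refine (natDegree_sub_le _ _).trans (max_le ?_ ((natDegree_C _).le.trans (Nat.zero_le l)))
    refine (natDegree_sum_le _ _).trans ?_
    apply Finset.sup_le
    intro u _
    refine (natDegree_C_mul_le _ _).trans ?_
    calc (X ^ (u.val+1) : F[X]).natDegree = u.val + 1 := natDegree_X_pow _
      _ ≤ l := u.isLt
  have hsub : (Finset.univ.filter fun k1 : F =>
      x.2 - j = ∑ u : Fin l, k1 ^ (u.val + 1) * (x.1 u - i u)) ⊆ p.roots.toFinset := by
    intro k1 hk1
    simp only [Finset.mem_filter, Finset.mem_univ, true_and] at hk1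
    rw [Multiset.mem_toFinset, mem_roots hpne, IsRoot.def, heval, sub_eq_zero]
    exact hk1.symm
  calc _ ≤ p.roots.toFinset.card := Finset.card_le_card hsub
    _ ≤ Multiset.card p.roots := p.roots.toFinset_card_le
    _ ≤ p.natDegree := p.card_roots'
    _ ≤ l := hdeg



/-- disambiguation by hashing, core of Lemma 3.  Fix
`(i,j) ∈ F^l × F` and a finite set `V` of pairs, none equal to `(i,j)`.  If
`K₁` is uniform on `F`, the probability that some `(i',j') ∈ V` is consistent
with `(i,j)` under `K₁` (i.e. `j' − j = ∑_{u=1}^l K₁^u (i'_u − i_u)`) is at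
most `|V| · l / |F|`. -/
theorem hash_disambiguation (F : Type*) [Field F] [Fintype F] [DecidableEq F]
    (l : ℕ) (hl : 1 ≤ l) (i : Fin l → F) (j : F)
    (V : Finset ((Fin l → F) × F)) (hV : ∀ x ∈ V, x ≠ (i, j)) :
    ((Finset.univ.filter fun k1 : F => ∃ x ∈ V,
        x.2 - j = ∑ u : Fin l, k1 ^ (u.val + 1) * (x.1 u - i u)).card : ℝ)
      / (Fintype.card F : ℝ)
    ≤ (V.card : ℝ) * (l : ℝ) / (Fintype.card F : ℝ) := by
  have hcard : (Finset.univ.filter fun k1 : F => ∃ x ∈ V,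
      x.2 - j = ∑ u : Fin l, k1 ^ (u.val + 1) * (x.1 u - i u)).card ≤ V.card * l := by
    have hsub : (Finset.univ.filter fun k1 : F => ∃ x ∈ V,
        x.2 - j = ∑ u : Fin l, k1 ^ (u.val + 1) * (x.1 u - i u)) ⊆
        V.biUnion (fun x => Finset.univ.filter fun k1 : F =>
          x.2 - j = ∑ u : Fin l, k1 ^ (u.val + 1) * (x.1 u - i u)) := by
      intro k1 hk1
      simp only [Finset.mem_filter, Finset.mem_univ, true_and] at hk1
      obtain ⟨x, hxV, hxe⟩ := hk1
      exact Finset.mem_biUnion.mpr ⟨x, hxV, by simp [hxe]⟩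
    calc _ ≤ _ := Finset.card_le_card hsub
      _ ≤ ∑ x ∈ V, (Finset.univ.filter fun k1 : F =>
          x.2 - j = ∑ u : Fin l, k1 ^ (u.val + 1) * (x.1 u - i u)).card :=
        Finset.card_biUnion_le
      _ ≤ ∑ _x ∈ V, l := Finset.sum_le_sum fun x hxV => per_pair_bound F l i j x (hV x hxV)
      _ = V.card * l := by rw [Finset.sum_const, smul_eq_mul]
  gcongr
  exact_mod_cast hcard

end PolyHash
end

section
/- Refined counting within a type class: let z, s ∈ {0,1}^n with the support of s contained in the support of z, wt_H(s) = w, and wt_H(z) = m. For natural numbers a ≤ m, b ≤ n − m, and i ≤ a, the number of vectors x ∈ {0,1}^n satisfying n·f^{xz}_{11}(x,z) = a, n·f^{xz}_{10}(x,z) = b, and n·f^{xs}_{11}(x,s) = i equals C(w, i) · C(m − w, a − i) · C(n − m, b), where C denotes the binomial coefficient. -/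
/-!
Binary vectors, Hamming weight, and joint-type counts.
For `x, z ∈ {0,1}^n` and `u, v ∈ {0,1}`, `fcount x z u v` is the number of
coordinates `i` with `(x_i, z_i) = (u, v)` (paper notation: `n·f^{xz}_{uv}`).
-/

namespace BinVec

open Finset

/-- Binary vectors of length `n`. -/
abbrev BV (n : ℕ) := Fin n → Bool

/-- Coordinatewise XOR of binary vectors. -/
def vxor {n : ℕ} (x y : BV n) : BV n := fun i => Bool.xor (x i) (y i)

/-- Hamming weight `wt_H`. -/
def wt {n : ℕ} (x : BV n) : ℕ := (Finset.univ.filter fun i => x i = true).card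

/-- `n·f^{xz}_{uv}(x,z)`: the number of coordinates `i` with
`(x_i, z_i) = (u, v)`. -/
def fcount {n : ℕ} (x z : BV n) (u v : Bool) : ℕ :=
  (Finset.univ.filter fun i => x i = u ∧ z i = v).card

end BinVec

namespace BinVec

/-- refined counting within a type class.  Let
`z, s ∈ {0,1}^n` with `supp(s) ⊆ supp(z)`, `wt_H(s) = w`, `wt_H(z) = m`.
For `a ≤ m`, `b ≤ n − m` and `i ≤ a`, the number of `x ∈ {0,1}^n` with
`n·f^{xz}_{11}(x,z) = a`, `n·f^{xz}_{10}(x,z) = b` and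
`n·f^{xs}_{11}(x,s) = i` equals `C(w,i) · C(m−w, a−i) · C(n−m, b)`. -/
theorem refined_type_class_card {n : ℕ} (z s : BV n) (w m a b i : ℕ)
    (hsupp : ∀ idx : Fin n, s idx = true → z idx = true)
    (hw : wt s = w) (hm : wt z = m)
    (ha : a ≤ m) (hb : b ≤ n - m) (hi : i ≤ a) :
    (Finset.univ.filter fun x : BV n =>
        fcount x z true true = a ∧ fcount x z true false = b ∧
          fcount x s true true = i).card
      = Nat.choose w i * Nat.choose (m - w) (a - i) * Nat.choose (n - m) b := by
  classical
  set S : Finset (Fin n) := Finset.univ.filter fun idx => s idx = true with hS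
  set Z : Finset (Fin n) := Finset.univ.filter fun idx => z idx = true with hZ
  set T : Finset (Fin n) := Z \ S with hT
  set U : Finset (Fin n) := Finset.univ \ Z with hU
  have memS : ∀ idx, idx ∈ S ↔ s idx = true := by intro idx; simp [hS]
  have memZ : ∀ idx, idx ∈ Z ↔ z idx = true := by intro idx; simp [hZ]
  have memT : ∀ idx, idx ∈ T ↔ (z idx = true ∧ ¬ s idx = true) := by
    intro idx; simp [hT, memZ, memS]
  have memU : ∀ idx, idx ∈ U ↔ z idx = false := by
    intro idx; simp [hU, memZ]
  have hSZ : S ⊆ Z := fun idx h => (memZ idx).2 (hsupp idx ((memS idx).1 h))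
  have hcS : S.card = w := hw
  have hcZ : Z.card = m := hm
  have hcT : T.card = m - w := by rw [hT, Finset.card_sdiff_of_subset hSZ, hcZ, hcS]
  have hcU : U.card = n - m := by
    rw [hU, Finset.card_sdiff_of_subset (Finset.subset_univ Z), Finset.card_univ, Fintype.card_fin, hcZ]
  -- rewrite fcounts
  have f11 : ∀ x : BV n, fcount x z true true = (S.filter fun idx => x idx = true).card
      + (T.filter fun idx => x idx = true).card := by
    intro x
    have hdisj : Disjoint (S.filter fun idx => x idx = true) (T.filter fun idx => x idx = true) := by
      apply Finset.disjoint_filter_filter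
      simp [hT, Finset.disjoint_sdiff]
    rw [← Finset.card_union_of_disjoint hdisj, ← Finset.filter_union]
    have : S ∪ T = Z := by rw [hT]; exact Finset.union_sdiff_of_subset hSZ
    rw [this, hZ, fcount, Finset.filter_filter]
    congr 1
    apply Finset.filter_congr
    intro idx _
    simp [and_comm]
  have f10 : ∀ x : BV n, fcount x z true false = (U.filter fun idx => x idx = true).card := by
    intro x
    rw [hU, fcount]
    congr 1
    ext idx
    simp [memU]
    simp only [memZ, Bool.not_eq_true]
    tauto
  have fs11 : ∀ x : BV n, fcount x s true true = (S.filter fun idx => x idx = true).card := by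
    intro x
    rw [hS, fcount, Finset.filter_filter]
    congr 1
    apply Finset.filter_congr
    intro idx _
    simp [and_comm]
  -- rewrite the condition
  have hcond : ∀ x : BV n,
      (fcount x z true true = a ∧ fcount x z true false = b ∧ fcount x s true true = i)
      ↔ ((S.filter fun idx => x idx = true).card = i
          ∧ (T.filter fun idx => x idx = true).card = a - i
          ∧ (U.filter fun idx => x idx = true).card = b) := by
    intro x
    rw [f11, f10, fs11]
    omega
  rw [Finset.filter_congr (fun x _ => by rw [hcond x])]
  -- bijection with triples
  have hrhs : Nat.choose w i * Nat.choose (m - w) (a - i) * Nat.choose (n - m) b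
      = ((S.powersetCard i ×ˢ T.powersetCard (a - i)) ×ˢ U.powersetCard b).card := by
    simp [Finset.card_powersetCard, hcS, hcT, hcU]
  rw [hrhs]
  have hinv : ∀ p : (Finset (Fin n) × Finset (Fin n)) × Finset (Fin n),
      p ∈ (S.powersetCard i ×ˢ T.powersetCard (a - i)) ×ˢ U.powersetCard b →
      (S.filter fun idx => decide (idx ∈ p.1.1 ∪ p.1.2 ∪ p.2) = true) = p.1.1
      ∧ (T.filter fun idx => decide (idx ∈ p.1.1 ∪ p.1.2 ∪ p.2) = true) = p.1.2
      ∧ (U.filter fun idx => decide (idx ∈ p.1.1 ∪ p.1.2 ∪ p.2) = true) = p.2 := by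
    intro p hp
    simp only [Finset.mem_product, Finset.mem_powersetCard] at hp
    obtain ⟨⟨⟨hA, hAc⟩, hB, hBc⟩, hC, hCc⟩ := hp
    refine ⟨?_, ?_, ?_⟩
    · ext idx
      simp only [Finset.mem_filter, decide_eq_true_eq, Finset.mem_union]
      constructor
      · rintro ⟨hidx, (h | h) | h⟩
        · exact h
        · exact absurd ((memT idx).1 (hB h)).2 (by simp [(memS idx).1 hidx])
        · have := (memU idx).1 (hC h)
          have := hsupp idx ((memS idx).1 hidx)
          simp_all
      · intro h; exact ⟨hA h, Or.inl (Or.inl h)⟩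
    · ext idx
      simp only [Finset.mem_filter, decide_eq_true_eq, Finset.mem_union]
      constructor
      · rintro ⟨hidx, (h | h) | h⟩
        · exact absurd ((memT idx).1 hidx).2 (by simp [(memS idx).1 (hA h)])
        · exact h
        · have := (memU idx).1 (hC h)
          have := ((memT idx).1 hidx).1
          simp_all
      · intro h; exact ⟨hB h, Or.inl (Or.inr h)⟩
    · ext idx
      simp only [Finset.mem_filter, decide_eq_true_eq, Finset.mem_union]
      constructor
      · rintro ⟨hidx, (h | h) | h⟩
        · have := (memU idx).1 hidx
          have := hsupp idx ((memS idx).1 (hA h))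
          simp_all
        · have := (memU idx).1 hidx
          have := ((memT idx).1 (hB h)).1
          simp_all
        · exact h
      · intro h; exact ⟨hC h, Or.inr h⟩
  apply Finset.card_bij'
    (i := fun x _ => ((S.filter fun idx => x idx = true, T.filter fun idx => x idx = true),
      U.filter fun idx => x idx = true))
    (j := fun p _ => fun idx => decide (idx ∈ p.1.1 ∪ p.1.2 ∪ p.2))
  · intro x hx
    simp only [Finset.mem_filter, Finset.mem_univ, true_and] at hx
    simp [Finset.mem_product, Finset.mem_powersetCard, Finset.filter_subset, hx.1, hx.2.1, hx.2.2]
  · intro p hp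
    obtain ⟨eA, eB, eC⟩ := hinv p hp
    simp only [Finset.mem_product, Finset.mem_powersetCard] at hp
    obtain ⟨⟨⟨hA, hAc⟩, hB, hBc⟩, hC, hCc⟩ := hp
    simp only [Finset.mem_filter, Finset.mem_univ, true_and]
    rw [eA, eB, eC]
    exact ⟨hAc, hBc, hCc⟩
  · intro x hx
    funext idx
    have hcover : idx ∈ S ∨ idx ∈ T ∨ idx ∈ U := by
      by_cases hz : z idx = true
      · by_cases hs : s idx = true
        · exact Or.inl ((memS idx).2 hs)
        · exact Or.inr (Or.inl ((memT idx).2 ⟨hz, hs⟩))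
      · exact Or.inr (Or.inr ((memU idx).2 (by simpa using hz)))
    rcases hcover with h | h | h <;>
    · simp only [decide_eq_true_eq, Finset.mem_union, Finset.mem_filter]
      by_cases hxi : x idx = true
      · simp [hxi, h]
      · simp only [hxi]
        simp only [Bool.not_eq_true] at hxi
        simp [hxi]
  · intro p hp
    obtain ⟨eA, eB, eC⟩ := hinv p hp
    exact Prod.ext (Prod.ext eA eB) eC

end BinVec
end

section
/- Unimodality of hypergeometric terms: let a, b, c be natural numbers with c ≤ b, define g(i) = C(a, i)·C(b, c − i), and let φ = (a·c + c − b − 1)/(a + b + 2) (as a rational number). Then for every natural number i with i < a and i < c: if i < φ then g(i + 1) > g(i), and if i > φ then g(i + 1) < g(i). -/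
/-- unimodality of hypergeometric terms.  Let `a, b, c` be
natural numbers with `c ≤ b`, put `g(i) = C(a,i) · C(b, c−i)` and let
`φ = (a·c + c − b − 1)/(a + b + 2)` as a rational number.  Then for every `i`
with `i < a` and `i < c`: if `i < φ` then `g(i+1) > g(i)`, and if `i > φ`
then `g(i+1) < g(i)`. -/
theorem hypergeom_unimodal (a b c i : ℕ) (hcb : c ≤ b)
    (hia : i < a) (hic : i < c) :
    ((i : ℚ) < ((a : ℚ) * c + c - b - 1) / ((a : ℚ) + b + 2) →
      Nat.choose a i * Nat.choose b (c - i)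
        < Nat.choose a (i + 1) * Nat.choose b (c - (i + 1))) ∧
    (((a : ℚ) * c + c - b - 1) / ((a : ℚ) + b + 2) < (i : ℚ) →
      Nat.choose a (i + 1) * Nat.choose b (c - (i + 1))
        < Nat.choose a i * Nat.choose b (c - i)) := by
  have hd : (0 : ℚ) < (a : ℚ) + b + 2 := by positivity
  have h1 : Nat.choose a (i + 1) * (i + 1) = Nat.choose a i * (a - i) :=
    Nat.choose_succ_right_eq a i
  have h2 : Nat.choose b (c - (i + 1) + 1) * (c - (i + 1) + 1)
      = Nat.choose b (c - (i + 1)) * (b - (c - (i + 1))) :=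
    Nat.choose_succ_right_eq b (c - (i + 1))
  rw [show c - (i + 1) + 1 = c - i from by omega] at h2
  have hx : 0 < Nat.choose a i := Nat.choose_pos hia.le
  have hy : 0 < Nat.choose b (c - i) := Nat.choose_pos (by omega)
  have hx' : 0 < Nat.choose a (i + 1) := Nat.choose_pos hia
  have hy' : 0 < Nat.choose b (c - (i + 1)) := Nat.choose_pos (by omega)
  have key : (a - i) * (c - i) * (Nat.choose a i * Nat.choose b (c - i))
      = (i + 1) * (b - (c - (i + 1)))
        * (Nat.choose a (i + 1) * Nat.choose b (c - (i + 1))) := by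
    calc (a - i) * (c - i) * (Nat.choose a i * Nat.choose b (c - i))
        = (Nat.choose a i * (a - i)) * (Nat.choose b (c - i) * (c - i)) := by ring
      _ = (Nat.choose a (i + 1) * (i + 1))
            * (Nat.choose b (c - (i + 1)) * (b - (c - (i + 1)))) := by rw [← h1, h2]
      _ = (i + 1) * (b - (c - (i + 1)))
            * (Nat.choose a (i + 1) * Nat.choose b (c - (i + 1))) := by ring
  have hcast : (((i + 1) * (b - (c - (i + 1))) : ℕ) : ℚ)
      = ((i : ℚ) + 1) * ((b : ℚ) - c + i + 1) := by
    rw [Nat.cast_mul, Nat.cast_sub (show c - (i + 1) ≤ b by omega),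
      Nat.cast_sub (show i + 1 ≤ c by omega)]
    push_cast
    ring
  have hcast2 : (((a - i) * (c - i) : ℕ) : ℚ)
      = ((a : ℚ) - i) * ((c : ℚ) - i) := by
    rw [Nat.cast_mul, Nat.cast_sub hia.le, Nat.cast_sub hic.le]
  constructor
  · intro h
    have h' := (lt_div_iff₀ hd).mp h
    have hnat : (i + 1) * (b - (c - (i + 1))) < (a - i) * (c - i) := by
      have : (((i + 1) * (b - (c - (i + 1))) : ℕ) : ℚ)
          < (((a - i) * (c - i) : ℕ) : ℚ) := by
        rw [hcast, hcast2]; nlinarith [h']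
      exact_mod_cast this
    have h4 : (a - i) * (c - i) * (Nat.choose a i * Nat.choose b (c - i))
        < (a - i) * (c - i)
          * (Nat.choose a (i + 1) * Nat.choose b (c - (i + 1))) := by
      rw [key]
      exact mul_lt_mul_of_pos_right hnat (Nat.mul_pos hx' hy')
    exact Nat.lt_of_mul_lt_mul_left h4
  · intro h
    have h' := (div_lt_iff₀ hd).mp h
    have hnat : (a - i) * (c - i) < (i + 1) * (b - (c - (i + 1))) := by
      have : (((a - i) * (c - i) : ℕ) : ℚ)
          < (((i + 1) * (b - (c - (i + 1))) : ℕ) : ℚ) := by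
        rw [hcast, hcast2]; nlinarith [h']
      exact_mod_cast this
    have h4 : (i + 1) * (b - (c - (i + 1)))
          * (Nat.choose a (i + 1) * Nat.choose b (c - (i + 1)))
        < (i + 1) * (b - (c - (i + 1)))
          * (Nat.choose a i * Nat.choose b (c - i)) := by
      rw [← key]
      exact mul_lt_mul_of_pos_right hnat (Nat.mul_pos hx hy)
    exact Nat.lt_of_mul_lt_mul_left h4
end
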